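/- arXiv:q-alg/9612023 — 4 statements merged into one kernel-verified Lean document; each statement's English description precedes it below -/
import Mathlib

section
/- Let A be a k-algebra, C a k-coalgebra, and M a left A-module and right C-comodule satisfying δ(am) = (a ⊗ 1)δ(m) (an A-C-dimodule). If P is a finitely generated left A-module, then Hom_A(P, M) carries a right C-comodule structure δ such that the composition of δ with the canonical map Hom_A(P,M) ⊗ C → Hom_A(P, M ⊗ C) equals Hom_A(P, δ_M). -/
open TensorProduct

namespace Stmt3Aux

variable {k A M P : Type*} [Field k] [Ring A] [Algebra k A]
  [AddCommGroup M] [Module k M] [Module A M] [IsScalarTower k A M] [SMulCommClass A k M]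
  [AddCommGroup P] [Module k P] [Module A P] [IsScalarTower k A P] [SMulCommClass A k P]

/-- Evaluation at `p` as a `k`-linear map. -/
def ev (p : P) : (P →ₗ[A] M) →ₗ[k] M where
  toFun g := g p
  map_add' _ _ := rfl
  map_smul' _ _ := rfl

@[simp] lemma ev_apply (p : P) (g : P →ₗ[A] M) : ev (k := k) p g = g p := rfl

/-- Joint injectivity of the evaluation maps tensored with an arbitrary `k`-module. -/
lemma injKey (V : Type*) [AddCommGroup V] [Module k V] {x : (P →ₗ[A] M) ⊗[k] V}
    (h : ∀ p : P, LinearMap.rTensor V (ev (k := k) p) x = 0) : x = 0 := by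
  classical
  let b := Module.Basis.ofVectorSpace k V
  set ι := Module.Basis.ofVectorSpaceIndex k V with hι
  have hcomm : ∀ (y : (P →ₗ[A] M) ⊗[k] V) (i : ι) (p : P),
      (finsuppScalarRight k k (P →ₗ[A] M) ι
          (LinearMap.lTensor (P →ₗ[A] M) b.repr.toLinearMap y) i) p
        = finsuppScalarRight k k M ι (LinearMap.lTensor M b.repr.toLinearMap
            (LinearMap.rTensor V (ev (k := k) p) y)) i := by
    intro y i p
    induction y using TensorProduct.induction_on with
    | zero => simp
    | tmul g v =>
        simp [finsuppScalarRight_apply_tmul_apply, LinearMap.smul_apply]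
    | add y z hy hz =>
        simp only [map_add, Finsupp.add_apply, LinearMap.add_apply, hy, hz]
  have h1 : LinearMap.lTensor (P →ₗ[A] M) (b.repr.toLinearMap) x = 0 := by
    apply (finsuppScalarRight k k (P →ₗ[A] M) ι).injective
    rw [map_zero]
    ext i p
    rw [Finsupp.coe_zero, Pi.zero_apply, LinearMap.zero_apply, hcomm x i p, h p]
    simp
  have h2 : Function.Injective (LinearMap.lTensor (P →ₗ[A] M) b.repr.toLinearMap) :=
    Module.Flat.lTensor_preserves_injective_linearMap _ b.repr.injective
  exact h2 (by simpa using h1)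

lemma uniq (V : Type*) [AddCommGroup V] [Module k V] {x y : (P →ₗ[A] M) ⊗[k] V}
    (h : ∀ p : P, LinearMap.rTensor V (ev (k := k) p) x
        = LinearMap.rTensor V (ev (k := k) p) y) : x = y := by
  have := injKey (k := k) V (x := x - y) (fun p => by rw [map_sub, h, sub_self])
  exact sub_eq_zero.mp this

/-- Existence of a preimage under the canonical map for a f.g. module `P`. -/
lemma exists_rep {C : Type*} [AddCommGroup C] [Module k C] [Module.Finite A P]
    (δM : M →ₗ[k] M ⊗[k] C)
    (hdimod : ∀ (a : A) (m : M),
      δM (a • m) = LinearMap.rTensor C (DistribMulAction.toLinearMap k M a) (δM m))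
    (f : P →ₗ[A] M) :
    ∃ x : (P →ₗ[A] M) ⊗[k] C, ∀ p : P, LinearMap.rTensor C (ev (k := k) p) x = δM (f p) := by
  classical
  obtain ⟨s, hs⟩ : (⊤ : Submodule A P).FG := Module.finite_def.mp inferInstance
  obtain ⟨U, hUfin, hU⟩ := TensorProduct.exists_finite_submodule_right_of_setFinite
    ((fun p => δM (f p)) '' s) (s.finite_toSet.image _)
  haveI := hUfin
  set N : Submodule k (M ⊗[k] C) := LinearMap.range (U.subtype.lTensor M) with hN
  have hcomm : ∀ (a : A),
      (DistribMulAction.toLinearMap k M a).rTensor C ∘ₗ U.subtype.lTensor M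
        = U.subtype.lTensor M ∘ₗ (DistribMulAction.toLinearMap k M a).rTensor U := by
    intro a
    rw [LinearMap.rTensor_comp_lTensor, LinearMap.lTensor_comp_rTensor]
  have hstable : ∀ (a : A) (y : M ⊗[k] C), y ∈ N →
      LinearMap.rTensor C (DistribMulAction.toLinearMap k M a) y ∈ N := by
    rintro a _ ⟨z, rfl⟩
    exact ⟨LinearMap.rTensor U (DistribMulAction.toLinearMap k M a) z,
      (LinearMap.congr_fun (hcomm a) z).symm⟩
  let S : Submodule A P :=
    { carrier := {p | δM (f p) ∈ N}
      add_mem' := by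
        intro p q hp hq
        simp only [Set.mem_setOf_eq, map_add] at *
        exact N.add_mem hp hq
      zero_mem' := by simp only [Set.mem_setOf_eq, map_zero]; exact N.zero_mem
      smul_mem' := by
        intro a p hp
        simp only [Set.mem_setOf_eq] at *
        rw [map_smul, hdimod]
        exact hstable a _ hp }
  have hmem : ∀ p : P, δM (f p) ∈ N := by
    have hle : Submodule.span A (s : Set P) ≤ S :=
      Submodule.span_le.2 (fun p hp => hU ⟨p, hp, rfl⟩)
    rw [hs] at hle
    exact fun p => hle trivial
  have hinj : Function.Injective (U.subtype.lTensor M) :=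
    Module.Flat.lTensor_preserves_injective_linearMap _ U.injective_subtype
  have hmem' : ∀ p : P, ∃ z : M ⊗[k] U, U.subtype.lTensor M z = δM (f p) :=
    fun p => LinearMap.mem_range.mp (hmem p)
  choose y hy using hmem'
  have hyadd : ∀ p q : P, y (p + q) = y p + y q := fun p q =>
    hinj (by simp only [map_add, hy])
  have hysmul : ∀ (a : A) (p : P),
      y (a • p) = LinearMap.rTensor U (DistribMulAction.toLinearMap k M a) (y p) := by
    intro a p
    apply hinj
    rw [hy, map_smul, hdimod, ← hy p, ← LinearMap.comp_apply, hcomm a, LinearMap.comp_apply]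
  set ι := Module.Free.ChooseBasisIndex k U with hιdef
  let b : Module.Basis ι k U := Module.Free.chooseBasis k U
  let Ψ : M ⊗[k] U →ₗ[k] (ι →₀ M) :=
    (finsuppScalarRight k k M ι).toLinearMap ∘ₗ LinearMap.lTensor M b.repr.toLinearMap
  have hΨsmul : ∀ (a : A) (z : M ⊗[k] U) (i : ι),
      Ψ (LinearMap.rTensor U (DistribMulAction.toLinearMap k M a) z) i = a • Ψ z i := by
    intro a z i
    induction z using TensorProduct.induction_on with
    | zero => simp
    | tmul m u =>
        simp only [LinearMap.rTensor_tmul, DistribSMul.toLinearMap_apply, Ψ,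
          LinearMap.comp_apply, LinearMap.lTensor_tmul, LinearEquiv.coe_coe,
          finsuppScalarRight_apply_tmul_apply]
        exact smul_comm _ _ _
    | add z w hz hw => simp only [map_add, Finsupp.add_apply, hz, hw, smul_add]
  let g : ι → (P →ₗ[A] M) := fun i =>
    { toFun := fun p => Ψ (y p) i
      map_add' := fun p q => by
        show Ψ (y (p + q)) i = Ψ (y p) i + Ψ (y q) i
        rw [hyadd, map_add, Finsupp.add_apply]
      map_smul' := fun a p => by
        show Ψ (y (a • p)) i = a • Ψ (y p) i
        rw [hysmul, hΨsmul] }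
  have hrecon : ∀ z : M ⊗[k] U, (∑ i : ι, (Ψ z i) ⊗ₜ[k] (b i)) = z := by
    intro z
    induction z using TensorProduct.induction_on with
    | zero => simp
    | tmul m u =>
        have : ∀ i : ι, (Ψ (m ⊗ₜ[k] u) i) ⊗ₜ[k] (b i) = m ⊗ₜ[k] (b.repr u i • b i) := by
          intro i
          rw [show Ψ (m ⊗ₜ[k] u) i = b.repr u i • m by
            simp [Ψ, finsuppScalarRight_apply_tmul_apply]]
          rw [TensorProduct.smul_tmul]
        rw [Finset.sum_congr rfl (fun i _ => this i), ← TensorProduct.tmul_sum,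
          b.sum_repr u]
    | add z w hz hw =>
        simp only [map_add, Finsupp.add_apply, TensorProduct.add_tmul, Finset.sum_add_distrib,
          hz, hw]
  refine ⟨∑ i : ι, (g i) ⊗ₜ[k] (U.subtype (b i)), fun p => ?_⟩
  rw [map_sum]
  simp only [LinearMap.rTensor_tmul, ev_apply]
  have step : (∑ i : ι, ((g i) p) ⊗ₜ[k] (U.subtype (b i)))
      = U.subtype.lTensor M (∑ i : ι, (Ψ (y p) i) ⊗ₜ[k] (b i)) := by
    rw [map_sum]
    simp only [LinearMap.lTensor_tmul]
    rfl
  rw [step, hrecon, hy]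

end Stmt3Aux

/-- Let `A` be a `k`-algebra, `C` a `k`-coalgebra, and `M` a left `A`-module and
right `C`-comodule satisfying `δ(am) = (a ⊗ 1) δ(m)` (an `A`-`C`-dimodule).  If `P` is a
finitely generated left `A`-module, then `Hom_A(P, M)` carries a right `C`-comodule structure
`δ` such that composing `δ` with the canonical map
`Hom_A(P,M) ⊗ C → Hom_A(P, M ⊗ C)` equals `Hom_A(P, δ_M)`; equivalently, for every
`f : Hom_A(P,M)` and `p : P` one has `(ev_p ⊗ 1)(δ f) = δ_M (f p)`. -/
theorem stmt3 (k A C M P : Type*) [Field k] [Ring A] [Algebra k A]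
    [AddCommGroup C] [Module k C] [Coalgebra k C]
    [AddCommGroup M] [Module k M] [Module A M] [IsScalarTower k A M] [SMulCommClass A k M]
    [AddCommGroup P] [Module k P] [Module A P] [IsScalarTower k A P] [SMulCommClass A k P]
    [Module.Finite A P]
    (δM : M →ₗ[k] M ⊗[k] C)
    (hcoassoc : (TensorProduct.assoc k M C C).toLinearMap ∘ₗ (LinearMap.rTensor C δM) ∘ₗ δM =
      (LinearMap.lTensor M Coalgebra.comul) ∘ₗ δM)
    (hcounit : (TensorProduct.rid k M).toLinearMap ∘ₗ (LinearMap.lTensor M Coalgebra.counit) ∘ₗ δM =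
      LinearMap.id)
    (hdimod : ∀ (a : A) (m : M),
      δM (a • m) = LinearMap.rTensor C (DistribMulAction.toLinearMap k M a) (δM m)) :
    ∃ δ : (P →ₗ[A] M) →ₗ[k] (P →ₗ[A] M) ⊗[k] C,
      ((TensorProduct.assoc k (P →ₗ[A] M) C C).toLinearMap ∘ₗ (LinearMap.rTensor C δ) ∘ₗ δ =
        (LinearMap.lTensor (P →ₗ[A] M) Coalgebra.comul) ∘ₗ δ) ∧
      ((TensorProduct.rid k (P →ₗ[A] M)).toLinearMap ∘ₗ
          (LinearMap.lTensor (P →ₗ[A] M) Coalgebra.counit) ∘ₗ δ = LinearMap.id) ∧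
      ∀ (f : P →ₗ[A] M) (p : P),
        LinearMap.rTensor C
          ({ toFun := fun g : P →ₗ[A] M => g p,
             map_add' := fun _ _ => rfl,
             map_smul' := fun _ _ => rfl } : (P →ₗ[A] M) →ₗ[k] M) (δ f) = δM (f p) := by
  classical
  open Stmt3Aux in
  choose F hF using fun f : P →ₗ[A] M => Stmt3Aux.exists_rep (k := k) δM hdimod f
  let δ : (P →ₗ[A] M) →ₗ[k] (P →ₗ[A] M) ⊗[k] C :=
    { toFun := F
      map_add' := fun f g => Stmt3Aux.uniq (k := k) C (fun p => by
        rw [hF, map_add, hF, hF, LinearMap.add_apply, map_add])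
      map_smul' := fun c f => Stmt3Aux.uniq (k := k) C (fun p => by
        rw [hF, RingHom.id_apply, map_smul, hF, LinearMap.smul_apply, map_smul]) }
  have hδ : ∀ (f : P →ₗ[A] M) (p : P),
      LinearMap.rTensor C (Stmt3Aux.ev (k := k) p) (δ f) = δM (f p) := fun f p => hF f p
  refine ⟨δ, ?_, ?_, fun f p => hδ f p⟩
  · -- coassociativity
    apply LinearMap.ext
    intro f
    apply Stmt3Aux.uniq (k := k) (C ⊗[k] C)
    intro p
    have hassocnat : ∀ (y : ((P →ₗ[A] M) ⊗[k] C) ⊗[k] C),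
        LinearMap.rTensor (C ⊗[k] C) (Stmt3Aux.ev (k := k) p)
            ((TensorProduct.assoc k (P →ₗ[A] M) C C) y)
          = TensorProduct.assoc k M C C
              (LinearMap.rTensor C (LinearMap.rTensor C (Stmt3Aux.ev (k := k) p)) y) := by
      intro y
      induction y using TensorProduct.induction_on with
      | zero => simp
      | tmul z c =>
          induction z using TensorProduct.induction_on with
          | zero => simp
          | tmul g c' => simp
          | add z w hz hw =>
              simp only [TensorProduct.add_tmul, map_add, hz, hw]
      | add y z hy hz => simp only [map_add, hy, hz]
    have hkey : (LinearMap.rTensor C (Stmt3Aux.ev (k := k) p)) ∘ₗ δ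
        = δM ∘ₗ (Stmt3Aux.ev (k := k) p) := LinearMap.ext fun g => hδ g p
    have hlnat : ∀ (x : (P →ₗ[A] M) ⊗[k] C),
        LinearMap.rTensor (C ⊗[k] C) (Stmt3Aux.ev (k := k) p)
            (LinearMap.lTensor (P →ₗ[A] M) Coalgebra.comul x)
          = LinearMap.lTensor M Coalgebra.comul
              (LinearMap.rTensor C (Stmt3Aux.ev (k := k) p) x) := by
      intro x
      induction x using TensorProduct.induction_on with
      | zero => simp
      | tmul g c => simp
      | add x y hx hy => simp only [map_add, hx, hy]
    simp only [LinearMap.comp_apply, LinearEquiv.coe_coe]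
    rw [hassocnat, ← LinearMap.comp_apply (LinearMap.rTensor C (LinearMap.rTensor C _)),
      ← LinearMap.rTensor_comp, hkey, LinearMap.rTensor_comp, LinearMap.comp_apply,
      hδ f p, hlnat, hδ f p]
    have := LinearMap.congr_fun hcoassoc (f p)
    simpa only [LinearMap.comp_apply, LinearEquiv.coe_coe] using this
  · -- counit
    apply LinearMap.ext
    intro f
    apply LinearMap.ext
    intro p
    have hcnt : ∀ (x : (P →ₗ[A] M) ⊗[k] C),
        (TensorProduct.rid k (P →ₗ[A] M)
            (LinearMap.lTensor (P →ₗ[A] M) (Coalgebra.counit (R := k)) x)) p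
          = TensorProduct.rid k M (LinearMap.lTensor M Coalgebra.counit
              (LinearMap.rTensor C (Stmt3Aux.ev (k := k) p) x)) := by
      intro x
      induction x using TensorProduct.induction_on with
      | zero => simp
      | tmul g c => simp
      | add x y hx hy =>
          simp only [map_add, LinearMap.add_apply, hx, hy]
    simp only [LinearMap.comp_apply, LinearEquiv.coe_coe, LinearMap.id_apply]
    rw [hcnt, hδ f p]
    have := LinearMap.congr_fun hcounit (f p)
    simpa only [LinearMap.comp_apply, LinearEquiv.coe_coe, LinearMap.id_apply] using this
end

section
/- For a k[B_n]-module M and unit ζ, the subspace M(ζ) := {m ∈ M | φ⁻¹τ_i²φ(m) = ζ²m for all φ ∈ B_n, i = 1,...,n−1} is a k[B_n]-submodule of M, and the formulas σ_i(m) := ζ⁻¹τ_i(m) define a k[S_n]-module structure on M(ζ). -/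
/-- The defining relations of the Artin braid group with `m` generators
`τ_0, …, τ_{m-1}` (so this presents the braid group `B_{m+1}`). -/
def braidRels (m : ℕ) : Set (FreeGroup (Fin m)) :=
  {r | (∃ i j : Fin m, (i : ℕ) + 2 ≤ (j : ℕ) ∧
        r = FreeGroup.of i * FreeGroup.of j * (FreeGroup.of i)⁻¹ * (FreeGroup.of j)⁻¹) ∨
      (∃ i j : Fin m, (i : ℕ) + 1 = (j : ℕ) ∧
        r = FreeGroup.of i * FreeGroup.of j * FreeGroup.of i *
            (FreeGroup.of j)⁻¹ * (FreeGroup.of i)⁻¹ * (FreeGroup.of j)⁻¹)}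

/-- The braid group on `m` generators (i.e. the Artin braid group `B_{m+1}`). -/
abbrev BraidGroup (m : ℕ) := PresentedGroup (braidRels m)

/-- The canonical generators `τ_i` of the braid group. -/
def braidGen {m : ℕ} (i : Fin m) : BraidGroup m := PresentedGroup.of i

/-- The `ζ`-symmetrization subspace
`M(ζ) = {m ∈ M | φ⁻¹ τ_i² φ (m) = ζ² m for all φ ∈ B, i}` of a `k[B]`-module `M`,
where `B` is the braid group on `m` generators. -/
def Mzeta (k : Type*) [Field k] (m : ℕ) (M : Type*) [AddCommGroup M] [Module k M]
    [DistribMulAction (BraidGroup m) M] [SMulCommClass (BraidGroup m) k M] (ζ : kˣ) :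
    Submodule k M where
  carrier := {x | ∀ (φ : BraidGroup m) (i : Fin m),
    (φ⁻¹ * braidGen i ^ 2 * φ) • x = ((ζ : k) ^ 2) • x}
  add_mem' := by
    intro a b ha hb φ i
    rw [smul_add, ha φ i, hb φ i, smul_add]
  zero_mem' := by
    intro φ i
    rw [smul_zero, smul_zero]
  smul_mem' := by
    intro c x hx φ i
    rw [smul_comm, hx φ i, smul_comm]


namespace Stmt6Aux
open Equiv

/-- adjacent transposition of naturals -/
def sw (i : ℕ) : Perm ℕ := Equiv.swap i (i + 1)

/-- the cycle word `s_a s_{a+1} ⋯ s_{a+k-1}` -/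
def cw : ℕ → ℕ → Perm ℕ
  | _, 0 => 1
  | a, (k+1) => sw a * cw (a+1) k

lemma sw_apply_of_ne (i x : ℕ) (h1 : x ≠ i) (h2 : x ≠ i+1) : sw i x = x :=
  Equiv.swap_apply_of_ne_of_ne h1 h2

lemma cw_apply_of_lt : ∀ (k a x : ℕ), x < a → cw a k x = x
  | 0, _, _, _ => rfl
  | (k+1), a, x, h => by
    have := cw_apply_of_lt k (a+1) x (by omega)
    simp only [cw, Perm.mul_apply, this]
    exact sw_apply_of_ne a x (by omega) (by omega)

lemma cw_apply_of_gt : ∀ (k a x : ℕ), a + k < x → cw a k x = x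
  | 0, _, _, _ => rfl
  | (k+1), a, x, h => by
    have := cw_apply_of_gt k (a+1) x (by omega)
    simp only [cw, Perm.mul_apply, this]
    exact sw_apply_of_ne a x (by omega) (by omega)

lemma cw_apply_top : ∀ (k a : ℕ), cw a k (a + k) = a
  | 0, a => rfl
  | (k+1), a => by
    have := cw_apply_top k (a+1)
    simp only [cw, Perm.mul_apply]
    rw [show a + (k+1) = (a+1) + k by omega, this]
    exact Equiv.swap_apply_right a (a+1)

lemma cw_apply_mid : ∀ (k a x : ℕ), a ≤ x → x < a + k → cw a k x = x + 1
  | 0, _, _, h1, h2 => by omega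
  | (k+1), a, x, h1, h2 => by
    simp only [cw, Perm.mul_apply]
    rcases eq_or_lt_of_le h1 with h | h
    · rw [← h, cw_apply_of_lt k (a+1) a (by omega)]
      exact Equiv.swap_apply_left a (a+1)
    · rw [cw_apply_mid k (a+1) x (by omega) (by omega)]
      exact sw_apply_of_ne a (x+1) (by omega) (by omega)

lemma inv_apply_of (σ : Perm ℕ) {x y : ℕ} (h : σ x = y) : σ⁻¹ y = x := by
  rw [← h]; simp

/-- conjugation: distant case -/
lemma conj_lt (k a i : ℕ) (h : i + 1 < a) : (cw a k)⁻¹ * sw i * cw a k = sw i := by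
  have h1 : (cw a k)⁻¹ i = i := inv_apply_of _ (cw_apply_of_lt k a i (by omega))
  have h2 : (cw a k)⁻¹ (i+1) = i + 1 := inv_apply_of _ (cw_apply_of_lt k a (i+1) (by omega))
  have := Equiv.swap_apply_apply ((cw a k)⁻¹) i (i+1)
  rw [h1, h2] at this
  rw [sw]
  conv_rhs => rw [this]
  group

/-- conjugation: sliding case -/
lemma conj_gt (k a i : ℕ) (h : a < i) (h2 : i + 1 ≤ a + k) :
    (cw a k)⁻¹ * sw i * cw a k = sw (i-1) := by
  have h1 : (cw a k)⁻¹ i = i - 1 := by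
    refine inv_apply_of _ ?_
    rw [cw_apply_mid k a (i-1) (by omega) (by omega)]; omega
  have h1' : (cw a k)⁻¹ (i+1) = i := by
    refine inv_apply_of _ ?_
    exact cw_apply_mid k a i (by omega) (by omega)
  have := Equiv.swap_apply_apply ((cw a k)⁻¹) i (i+1)
  rw [h1, h1'] at this
  have e : sw (i-1) = swap (i-1) i := by rw [sw, show i - 1 + 1 = i by omega]
  rw [e]
  conv_rhs => rw [this]
  group
  rw [sw, Nat.add_comm i 1]


section Monoid
variable {G : Type*} [Monoid G] (f : ℕ → G)

/-- `word f a k = f a * f (a+1) * ⋯ * f (a+k-1)` -/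
def word : ℕ → ℕ → G
  | _, 0 => 1
  | a, (k+1) => f a * word (a+1) k

lemma word_comm (hcomm : ∀ i j, i + 2 ≤ j → f i * f j = f j * f i) :
    ∀ (k a i : ℕ), i + 2 ≤ a → f i * word f a k = word f a k * f i
  | 0, a, i, _ => by simp [word]
  | (k+1), a, i, h => by
    show f i * (f a * word f (a+1) k) = (f a * word f (a+1) k) * f i
    calc f i * (f a * word f (a+1) k) = (f i * f a) * word f (a+1) k := by rw [mul_assoc]
      _ = f a * (f i * word f (a+1) k) := by rw [hcomm i a h, mul_assoc]
      _ = f a * (word f (a+1) k * f i) := by rw [word_comm hcomm k (a+1) i (by omega)]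
      _ = (f a * word f (a+1) k) * f i := by rw [mul_assoc]

lemma word_slide (n : ℕ) (hcomm : ∀ i j, i + 2 ≤ j → f i * f j = f j * f i)
    (hbraid : ∀ i, i + 2 < n → f (i+1) * f i * f (i+1) = f i * f (i+1) * f i) :
    ∀ (k a i : ℕ), a < i → i < a + k → i + 1 < n →
      f i * word f a k = word f a k * f (i-1)
  | 0, a, i, h1, h2, _ => by omega
  | (k+1), a, i, h1, h2, hn => by
    show f i * (f a * word f (a+1) k) = (f a * word f (a+1) k) * f (i-1)
    rcases Nat.lt_or_ge (a+1) i with h | h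
    · calc f i * (f a * word f (a+1) k) = (f i * f a) * word f (a+1) k := by rw [mul_assoc]
        _ = f a * (f i * word f (a+1) k) := by rw [← hcomm a i (by omega), mul_assoc]
        _ = f a * (word f (a+1) k * f (i-1)) := by
            rw [word_slide n hcomm hbraid k (a+1) i h (by omega) hn]
        _ = (f a * word f (a+1) k) * f (i-1) := by rw [mul_assoc]
    · have hi : i = a + 1 := by omega
      subst hi
      obtain ⟨k', rfl⟩ : ∃ k', k = k' + 1 := ⟨k - 1, by omega⟩
      have hb := hbraid a (by omega)
      show f (a+1) * (f a * (f (a+1) * word f (a+2) k')) = (f a * (f (a+1) * word f (a+2) k')) * f (a+1-1)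
      rw [show a + 1 - 1 = a by omega]
      calc f (a+1) * (f a * (f (a+1) * word f (a+2) k'))
          = (f (a+1) * f a * f (a+1)) * word f (a+2) k' := by simp only [mul_assoc]
        _ = f a * f (a+1) * (f a * word f (a+2) k') := by rw [hb]; simp only [mul_assoc]
        _ = f a * f (a+1) * (word f (a+2) k' * f a) := by
            rw [word_comm f hcomm k' (a+2) a (by omega)]
        _ = (f a * (f (a+1) * word f (a+2) k')) * f a := by simp only [mul_assoc]

lemma sw_inv (i : ℕ) : (sw i)⁻¹ = sw i := Equiv.swap_inv i (i+1)
lemma sw_mul_self (i : ℕ) : sw i * sw i = 1 := Equiv.swap_mul_self i (i+1)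

def FixGE (m : ℕ) (π : Perm ℕ) : Prop := ∀ x, m ≤ x → π x = x

lemma FixGE.le' {m : ℕ} {π : Perm ℕ} (h : FixGE (m+1) π) : π m ≤ m := by
  by_contra hc
  push_neg at hc
  have h1 : π (π m) = π m := h _ hc
  have := π.injective h1
  omega

lemma FixGE.mono {m m' : ℕ} {π : Perm ℕ} (h : FixGE m π) (hm : m ≤ m') : FixGE m' π :=
  fun x hx => h x (le_trans hm hx)

lemma FixGE.one (m : ℕ) : FixGE m 1 := fun _ _ => rfl

lemma FixGE.mul {m : ℕ} {π σ : Perm ℕ} (h1 : FixGE m π) (h2 : FixGE m σ) : FixGE m (π * σ) :=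
  fun x hx => by rw [Perm.mul_apply, h2 x hx, h1 x hx]

lemma FixGE.sw {m i : ℕ} (h : i + 1 < m) : FixGE m (sw i) :=
  fun x hx => sw_apply_of_ne i x (by omega) (by omega)

lemma FixGE.hat {t : ℕ} {π : Perm ℕ} (h : FixGE (t+1) π) :
    FixGE t ((cw (π t) (t - π t))⁻¹ * π) := by
  have ha := h.le'
  intro x hx
  rcases eq_or_lt_of_le hx with hx' | hx'
  · have hc : cw (π t) (t - π t) t = π t := by
      have := cw_apply_top (t - π t) (π t)
      rwa [show π t + (t - π t) = t by omega] at this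
    rw [Perm.mul_apply, ← hx']
    exact inv_apply_of _ hc
  · rw [Perm.mul_apply, h x (by omega)]
    exact inv_apply_of _ (cw_apply_of_gt _ _ x (by omega))

def phi : ℕ → Perm ℕ → G
  | 0, _ => 1
  | (m+1), π => word f (π m) (m - π m) * phi m ((cw (π m) (m - π m))⁻¹ * π)

lemma phi_succ (m : ℕ) (π : Perm ℕ) :
    phi f (m+1) π = word f (π m) (m - π m) * phi f m ((cw (π m) (m - π m))⁻¹ * π) := rfl

theorem key (n : ℕ) (hsq : ∀ i, f i * f i = 1)
    (hcomm : ∀ i j, i + 2 ≤ j → f i * f j = f j * f i)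
    (hbraid : ∀ i, i + 2 < n → f (i+1) * f i * f (i+1) = f i * f (i+1) * f i) :
    ∀ m, m ≤ n → ∀ π : Perm ℕ, FixGE m π → ∀ i, i + 1 < m →
      phi f m (sw i * π) = f i * phi f m π := by
  intro m
  induction m with
  | zero => omega
  | succ t IH =>
    intro hmn π hπ i hi
    have ha : π t ≤ t := hπ.le'
    have hmul : (sw i * π) t = sw i (π t) := Perm.mul_apply _ _ _
    rw [phi_succ, phi_succ, hmul]
    by_cases h1 : i + 1 < π t
    · -- distant below case
      have hsw : sw i (π t) = π t := sw_apply_of_ne _ _ (by omega) (by omega)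
      rw [hsw]
      have hconj : (cw (π t) (t - π t))⁻¹ * (sw i * π) =
          sw i * ((cw (π t) (t - π t))⁻¹ * π) := by
        have hc := conj_lt (t - π t) (π t) i h1
        calc (cw (π t) (t - π t))⁻¹ * (sw i * π)
            = ((cw (π t) (t - π t))⁻¹ * sw i * cw (π t) (t - π t)) *
              ((cw (π t) (t - π t))⁻¹ * π) := by group
          _ = sw i * ((cw (π t) (t - π t))⁻¹ * π) := by rw [hc]
      rw [hconj, IH (by omega) _ hπ.hat i (by omega), ← mul_assoc,
        ← word_comm f hcomm (t - π t) (π t) i (by omega), mul_assoc]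
    · by_cases h2 : π t = i
      · -- a = i
        have hsw : sw i (π t) = i + 1 := by rw [h2]; exact Equiv.swap_apply_left i (i+1)
        rw [hsw, h2]
        have hcw : cw i (t - i) = sw i * cw (i+1) (t - (i+1)) := by
          rw [show t - i = (t - (i+1)) + 1 by omega]; rfl
        have harg : (cw (i+1) (t - (i+1)))⁻¹ * (sw i * π) = (cw i (t - i))⁻¹ * π := by
          rw [hcw, mul_inv_rev, sw_inv, mul_assoc]
        rw [harg, show t - i = (t - (i+1)) + 1 by omega]
        show word f (i+1) _ * _ = f i * (f i * word f (i+1) _ * _)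
        rw [← mul_assoc, ← mul_assoc, hsq i, one_mul]
      · by_cases h3 : π t = i + 1
        · -- a = i + 1
          have hsw : sw i (π t) = i := by rw [h3]; exact Equiv.swap_apply_right i (i+1)
          rw [hsw, h3]
          have hcw : cw i (t - i) = sw i * cw (i+1) (t - (i+1)) := by
            rw [show t - i = (t - (i+1)) + 1 by omega]; rfl
          have harg : (cw i (t - i))⁻¹ * (sw i * π) = (cw (i+1) (t - (i+1)))⁻¹ * π := by
            rw [hcw, mul_inv_rev, sw_inv, mul_assoc, ← mul_assoc (sw i), sw_mul_self, one_mul]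
          rw [harg, show t - i = (t - (i+1)) + 1 by omega]
          show f i * word f (i+1) _ * _ = f i * (word f (i+1) _ * _)
          rw [mul_assoc]
        · -- a < i
          have hai : π t < i := by omega
          have hsw : sw i (π t) = π t := sw_apply_of_ne _ _ (by omega) (by omega)
          rw [hsw]
          have hc := conj_gt (t - π t) (π t) i hai (by omega)
          have hconj : (cw (π t) (t - π t))⁻¹ * (sw i * π) =
              sw (i-1) * ((cw (π t) (t - π t))⁻¹ * π) := by
            calc (cw (π t) (t - π t))⁻¹ * (sw i * π)
                = ((cw (π t) (t - π t))⁻¹ * sw i * cw (π t) (t - π t)) *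
                  ((cw (π t) (t - π t))⁻¹ * π) := by group
              _ = sw (i-1) * ((cw (π t) (t - π t))⁻¹ * π) := by rw [hc]
          rw [hconj, IH (by omega) _ hπ.hat (i-1) (by omega), ← mul_assoc,
            ← word_slide f n hcomm hbraid (t - π t) (π t) i hai (by omega) (by omega),
            mul_assoc]

lemma phi_stable (m : ℕ) (π : Perm ℕ) (h : FixGE m π) : phi f (m+1) π = phi f m π := by
  have hm : π m = m := h m le_rfl
  rw [phi_succ, hm, Nat.sub_self]
  show word f m 0 * phi f m ((cw m 0)⁻¹ * π) = _
  show (1 : G) * phi f m ((1 : Perm ℕ)⁻¹ * π) = _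
  rw [one_mul, inv_one, one_mul]

lemma phi_eq_of_le (m m' : ℕ) (π : Perm ℕ) (h : FixGE m π) (hm : m ≤ m') :
    phi f m' π = phi f m π := by
  induction m', hm using Nat.le_induction with
  | base => rfl
  | succ m' hm' IH => rw [phi_stable f m' π (h.mono hm'), IH]

lemma phi_one (m : ℕ) : phi f m (1 : Perm ℕ) = 1 := by
  rw [phi_eq_of_le f 0 m 1 (FixGE.one 0) (Nat.zero_le m)]; rfl

end Monoid

theorem gen_ind (n : ℕ) (Q : Perm ℕ → Prop) (h1 : Q 1)
    (hs : ∀ i σ, i + 1 < n → Q σ → Q (sw i * σ)) :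
    ∀ m, m ≤ n → ∀ π, FixGE m π → Q π := by
  have aux : ∀ k a (σ : Perm ℕ), a + k < n → Q σ → Q (cw a k * σ) := by
    intro k
    induction k with
    | zero => intro a σ _ h; rw [show cw a 0 = 1 from rfl, one_mul]; exact h
    | succ k IHk =>
      intro a σ hk h
      have h' := hs a _ (by omega) (IHk (a+1) σ (by omega) h)
      show Q (sw a * cw (a+1) k * σ)
      rwa [mul_assoc]
  intro m
  induction m with
  | zero =>
    intro _ π hπ
    have : π = 1 := Equiv.ext fun x => hπ x (Nat.zero_le x)
    rwa [this]
  | succ t IHm =>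
    intro hmn π hπ
    have ha := hπ.le'
    have hdec : π = cw (π t) (t - π t) * ((cw (π t) (t - π t))⁻¹ * π) := by group
    rw [hdec]
    exact aux _ _ _ (by omega) (IHm (by omega) _ hπ.hat)

theorem phi_mul {G : Type*} [Monoid G] (f : ℕ → G) (n : ℕ) (hsq : ∀ i, f i * f i = 1)
    (hcomm : ∀ i j, i + 2 ≤ j → f i * f j = f j * f i)
    (hbraid : ∀ i, i + 2 < n → f (i+1) * f i * f (i+1) = f i * f (i+1) * f i) :
    ∀ π π' : Perm ℕ, FixGE n π → FixGE n π' →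
      phi f n (π * π') = phi f n π * phi f n π' := by
  intro π π' hπ hπ'
  have main := gen_ind n
    (fun σ => FixGE n σ ∧ ∀ τ : Perm ℕ, FixGE n τ → phi f n (σ * τ) = phi f n σ * phi f n τ)
    ⟨FixGE.one n, fun τ _ => by rw [one_mul, phi_one, one_mul]⟩
    (fun i σ hin hQ => ⟨(FixGE.sw hin).mul hQ.1, fun τ hτ => by
      rw [mul_assoc, key f n hsq hcomm hbraid n le_rfl (σ * τ) (hQ.1.mul hτ) i hin,
        hQ.2 τ hτ, key f n hsq hcomm hbraid n le_rfl σ hQ.1 i hin, mul_assoc]⟩)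
    n le_rfl π hπ
  exact main.2 π' hπ'

theorem phi_gen {G : Type*} [Monoid G] (f : ℕ → G) (n : ℕ) (hsq : ∀ i, f i * f i = 1)
    (hcomm : ∀ i j, i + 2 ≤ j → f i * f j = f j * f i)
    (hbraid : ∀ i, i + 2 < n → f (i+1) * f i * f (i+1) = f i * f (i+1) * f i)
    (i : ℕ) (h : i + 1 < n) : phi f n (sw i) = f i := by
  have := key f n hsq hcomm hbraid n le_rfl 1 (FixGE.one n) i h
  rw [mul_one] at this
  rw [this, phi_one, mul_one]




section ViaSwap
open Equiv
lemma viaEmbedding_swap {α β : Type*} [DecidableEq α] [DecidableEq β] (ι : α ↪ β) (a b : α) :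
    (Equiv.swap a b).viaEmbedding ι = Equiv.swap (ι a) (ι b) := by
  ext y
  by_cases hy : y ∈ Set.range ι
  · obtain ⟨z, rfl⟩ := hy
    rw [Perm.viaEmbedding_apply]
    rcases eq_or_ne z a with rfl | hza
    · rw [swap_apply_left, swap_apply_left]
    · rcases eq_or_ne z b with rfl | hzb
      · rw [swap_apply_right, swap_apply_right]
      · rw [swap_apply_of_ne_of_ne hza hzb,
          swap_apply_of_ne_of_ne (fun hh => hza (ι.injective hh))
            (fun hh => hzb (ι.injective hh))]
  · rw [Perm.viaEmbedding_apply_of_notMem _ _ _ hy,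
      swap_apply_of_ne_of_ne (fun hh => hy ⟨a, hh.symm⟩) (fun hh => hy ⟨b, hh.symm⟩)]

end ViaSwap

section Assemble
variable (k : Type*) [Field k] (m : ℕ) (M : Type*) [AddCommGroup M] [Module k M]
  [DistribMulAction (BraidGroup m) M] [SMulCommClass (BraidGroup m) k M] (ζ : kˣ)

lemma mem_Mzeta (x : M) : x ∈ Mzeta k m M ζ ↔ ∀ (φ : BraidGroup m) (i : Fin m),
    (φ⁻¹ * braidGen i ^ 2 * φ) • x = ((ζ : k) ^ 2) • x := Iff.rfl

lemma stab : ∀ (g : BraidGroup m) (x : M), x ∈ Mzeta k m M ζ → g • x ∈ Mzeta k m M ζ := by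
  intro g x hx φ i
  have e1 : (φ⁻¹ * braidGen i ^ 2 * φ) • g • x
      = g • (((φ * g)⁻¹ * braidGen i ^ 2 * (φ * g)) • x) := by
    rw [← mul_smul, ← mul_smul]
    congr 1
    group
  rw [e1, hx (φ * g) i, smul_comm]

/-- the endomorphism of `Mzeta` given by the action of `g` -/
def BE (g : BraidGroup m) : Module.End k (Mzeta k m M ζ) where
  toFun := fun x => ⟨g • (x : M), stab k m M ζ g x x.2⟩
  map_add' := fun x y => Subtype.ext (by simp [smul_add])
  map_smul' := fun c x => Subtype.ext (by simpa using smul_comm g c (x : M))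

lemma BE_mul (g h : BraidGroup m) : BE k m M ζ (g * h) = BE k m M ζ g * BE k m M ζ h :=
  LinearMap.ext fun x => Subtype.ext (mul_smul g h (x : M))

lemma BE_sq (i : Fin m) :
    BE k m M ζ (braidGen i) * BE k m M ζ (braidGen i) = ((ζ : k) ^ 2) • 1 := by
  rw [← BE_mul, ← sq]
  refine LinearMap.ext fun x => Subtype.ext ?_
  have := x.2 1 i
  show (braidGen i ^ 2) • (x : M) = _
  simpa using this

lemma braid_rel_one : ∀ r ∈ braidRels m, (PresentedGroup.mk (braidRels m) r) = 1 :=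
  fun r hr => (QuotientGroup.eq_one_iff r).2 (Subgroup.subset_normalClosure hr)

lemma braidGen_comm (i j : Fin m) (hij : (i : ℕ) + 2 ≤ (j : ℕ)) :
    braidGen i * braidGen j = braidGen j * braidGen i := by
  have h := braid_rel_one m _ (Or.inl ⟨i, j, hij, rfl⟩)
  have h2 : braidGen i * braidGen j * (braidGen i)⁻¹ * (braidGen j)⁻¹ = 1 := by
    simpa [braidGen, PresentedGroup.of, map_mul, map_inv] using h
  rw [mul_inv_eq_one] at h2
  rw [mul_inv_eq_iff_eq_mul] at h2
  rw [h2]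

lemma braidGen_braid (i j : Fin m) (hij : (i : ℕ) + 1 = (j : ℕ)) :
    braidGen i * braidGen j * braidGen i = braidGen j * braidGen i * braidGen j := by
  have h := braid_rel_one m _ (Or.inr ⟨i, j, hij, rfl⟩)
  have h2 : braidGen i * braidGen j * braidGen i *
      (braidGen j)⁻¹ * (braidGen i)⁻¹ * (braidGen j)⁻¹ = 1 := by
    simpa [braidGen, PresentedGroup.of, map_mul, map_inv] using h
  rw [mul_inv_eq_one] at h2
  rw [mul_inv_eq_iff_eq_mul, mul_inv_eq_iff_eq_mul] at h2
  rw [h2]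

/-- the sequence of endomorphisms `σ_j = ζ⁻¹ τ_j` -/
noncomputable def fSeq : ℕ → Module.End k (Mzeta k m M ζ) := fun j =>
  if h : j < m then ((ζ⁻¹ : kˣ) : k) • BE k m M ζ (braidGen ⟨j, h⟩) else 1

lemma nu_zeta : ((ζ⁻¹ : kˣ) : k) * (ζ : k) = 1 := by
  rw [← Units.val_mul, inv_mul_cancel, Units.val_one]

lemma fSeq_sq (j : ℕ) : fSeq k m M ζ j * fSeq k m M ζ j = 1 := by
  unfold fSeq
  by_cases h : j < m
  · rw [dif_pos h, smul_mul_assoc, mul_smul_comm, smul_smul, BE_sq, smul_smul]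
    have : ((ζ⁻¹ : kˣ) : k) * ((ζ⁻¹ : kˣ) : k) * (ζ : k) ^ 2 = 1 := by
      have := nu_zeta k ζ
      calc ((ζ⁻¹ : kˣ) : k) * ((ζ⁻¹ : kˣ) : k) * (ζ : k) ^ 2
          = (((ζ⁻¹ : kˣ) : k) * (ζ : k)) * (((ζ⁻¹ : kˣ) : k) * (ζ : k)) := by ring
        _ = 1 := by rw [this, one_mul]
    rw [this, one_smul]
  · rw [dif_neg h, one_mul]

lemma fSeq_comm (i j : ℕ) (hij : i + 2 ≤ j) :
    fSeq k m M ζ i * fSeq k m M ζ j = fSeq k m M ζ j * fSeq k m M ζ i := by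
  unfold fSeq
  by_cases hj : j < m
  · have hi : i < m := by omega
    rw [dif_pos hi, dif_pos hj]
    have hc := braidGen_comm m ⟨i, hi⟩ ⟨j, hj⟩ hij
    rw [smul_mul_assoc, mul_smul_comm, smul_smul, ← BE_mul, hc, BE_mul,
      smul_mul_assoc, mul_smul_comm, smul_smul]
  · rw [dif_neg hj, one_mul, mul_one]

lemma fSeq_braid (i : ℕ) (h : i + 1 < m) :
    fSeq k m M ζ (i+1) * fSeq k m M ζ i * fSeq k m M ζ (i+1)
      = fSeq k m M ζ i * fSeq k m M ζ (i+1) * fSeq k m M ζ i := by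
  unfold fSeq
  have hi : i < m := by omega
  rw [dif_pos hi, dif_pos h]
  have hb := braidGen_braid m ⟨i, hi⟩ ⟨i+1, h⟩ rfl
  simp only [smul_mul_assoc, mul_smul_comm, smul_smul, ← BE_mul]
  rw [← hb]

end Assemble
end Stmt6Aux

/-- For a `k[B_n]`-module `M` and a unit `ζ`, the subspace
`M(ζ) := {m ∈ M | φ⁻¹ τ_i² φ (m) = ζ² m  ∀ φ ∈ B_n, i}` is a `k[B_n]`-submodule of `M`
(it is a `k`-subspace by construction, and it is stable under the `B_n`-action), and the
formulas `σ_i (m) := ζ⁻¹ τ_i (m)` define a `k[S_n]`-module structure on `M(ζ)`. -/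
theorem stmt6 (k : Type*) [Field k] (n : ℕ) (hn : 2 ≤ n) (M : Type*) [AddCommGroup M]
    [Module k M] [DistribMulAction (BraidGroup (n - 1)) M]
    [SMulCommClass (BraidGroup (n - 1)) k M] (ζ : kˣ) :
    (∀ (g : BraidGroup (n - 1)) (x : M), x ∈ Mzeta k (n - 1) M ζ → g • x ∈ Mzeta k (n - 1) M ζ) ∧
    ∃ ρ : Equiv.Perm (Fin n) →* Module.End k (Mzeta k (n - 1) M ζ),
      ∀ (i : Fin (n - 1)) (x : Mzeta k (n - 1) M ζ),
        (ρ (Equiv.swap (⟨i.1, by have := i.2; omega⟩ : Fin n)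
            ⟨i.1 + 1, by have := i.2; omega⟩) x : M) =
          ((ζ⁻¹ : kˣ) : k) • (braidGen i • (x : M)) := by
  classical
  refine ⟨Stmt6Aux.stab k (n-1) M ζ, ?_⟩
  set f := Stmt6Aux.fSeq k (n-1) M ζ with hf
  have hsq := Stmt6Aux.fSeq_sq k (n-1) M ζ
  have hcomm := Stmt6Aux.fSeq_comm k (n-1) M ζ
  have hbraid : ∀ i, i + 2 < n → f (i+1) * f i * f (i+1) = f i * f (i+1) * f i :=
    fun i hi => Stmt6Aux.fSeq_braid k (n-1) M ζ i (by omega)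
  have hfix : ∀ π : Equiv.Perm (Fin n),
      Stmt6Aux.FixGE n (Equiv.Perm.viaEmbeddingHom Fin.valEmbedding π) := by
    intro π x hx
    refine Equiv.Perm.viaEmbedding_apply_of_notMem _ _ x ?_
    rintro ⟨z, rfl⟩
    simp only [Fin.valEmbedding_apply] at hx
    have := z.2
    omega
  refine ⟨{ toFun := fun π => Stmt6Aux.phi f n (Equiv.Perm.viaEmbeddingHom Fin.valEmbedding π)
            map_one' := by
              show Stmt6Aux.phi f n (Equiv.Perm.viaEmbeddingHom Fin.valEmbedding 1) = 1
              rw [map_one, Stmt6Aux.phi_one]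
            map_mul' := fun π π' => by
              show Stmt6Aux.phi f n (Equiv.Perm.viaEmbeddingHom Fin.valEmbedding (π * π')) = _ * _
              rw [map_mul]
              exact Stmt6Aux.phi_mul f n hsq hcomm hbraid _ _ (hfix π) (hfix π') }, ?_⟩
  intro i x
  simp only [MonoidHom.coe_mk, OneHom.coe_mk]
  have key : ∀ (A B : Fin n), (A : ℕ) = i.1 → (B : ℕ) = i.1 + 1 →
      ((Stmt6Aux.phi f n (Equiv.Perm.viaEmbeddingHom Fin.valEmbedding (Equiv.swap A B)) x : M))
        = ((ζ⁻¹ : kˣ) : k) • (braidGen i • (x : M)) := by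
    intro A B hA hB
    have hival : i.1 + 1 < n := by have := i.2; omega
    rw [Equiv.Perm.viaEmbeddingHom_apply, Stmt6Aux.viaEmbedding_swap,
      show (Fin.valEmbedding A : ℕ) = (A : ℕ) from rfl,
      show (Fin.valEmbedding B : ℕ) = (B : ℕ) from rfl, hA, hB,
      show Equiv.swap i.1 (i.1 + 1) = Stmt6Aux.sw i.1 from rfl,
      Stmt6Aux.phi_gen f n hsq hcomm hbraid i.1 hival, hf]
    simp only [Stmt6Aux.fSeq, dif_pos i.2, Fin.eta]
    simp [Stmt6Aux.BE]
  exact key _ _ rfl rfl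
end

section
/- For a k[B_n]-module M and a unit ζ, the subspace M(ζ) = {m ∈ M | φ⁻¹τ_i²φ(m) = ζ²m for all φ, i} coincides with {m ∈ M | τ_i⁻¹τ_{i+1}⁻¹···τ_{j−1}⁻¹ τ_j² τ_{j−1}···τ_{i+1}τ_i (m) = ζ²m for all 1 ≤ i ≤ j ≤ n−1}. -/
/-- The generator `τ_{i+1}` of the braid group, indexed by a natural number `i < m`
(and defined to be `1` out of range). -/
def braidGenNat (m : ℕ) (i : ℕ) : BraidGroup m := if h : i < m then braidGen ⟨i, h⟩ else 1

namespace BG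
variable {m : ℕ}

local notation "σ" => braidGenNat m

lemma rel_one {r : FreeGroup (Fin m)} (hr : r ∈ braidRels m) :
    PresentedGroup.mk (braidRels m) r = 1 :=
  (QuotientGroup.eq_one_iff r).2 (Subgroup.subset_normalClosure hr)

lemma braidGenNat_of {i : ℕ} (h : i < m) : σ i = braidGen ⟨i, h⟩ := dif_pos h

lemma braidGenNat_one {i : ℕ} (h : ¬ i < m) : σ i = 1 := dif_neg h

lemma commute_gen {a b : ℕ} (h : a + 2 ≤ b) : Commute (σ a) (σ b) := by
  by_cases hb : b < m
  · have ha : a < m := lt_trans (by omega) hb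
    have := rel_one (m := m) (Or.inl ⟨⟨a, ha⟩, ⟨b, hb⟩, h, rfl⟩)
    rw [braidGenNat_of ha, braidGenNat_of hb]
    have h2 : (braidGen (m:=m) ⟨a,ha⟩) * braidGen ⟨b,hb⟩ * (braidGen ⟨a,ha⟩)⁻¹ * (braidGen ⟨b,hb⟩)⁻¹ = 1 := this
    rw [mul_inv_eq_one, mul_inv_eq_iff_eq_mul] at h2
    exact h2
  · rw [braidGenNat_one hb]; exact Commute.one_right _

lemma braid_rel {a : ℕ} (h : a + 1 < m) :
    σ a * σ (a+1) * σ a = σ (a+1) * σ a * σ (a+1) := by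
  have ha : a < m := by omega
  have := rel_one (m := m) (Or.inr ⟨⟨a, ha⟩, ⟨a+1, h⟩, rfl, rfl⟩)
  rw [braidGenNat_of ha, braidGenNat_of h]
  have h2 : braidGen (m:=m) ⟨a,ha⟩ * braidGen ⟨a+1,h⟩ * braidGen ⟨a,ha⟩ *
      (braidGen ⟨a+1,h⟩)⁻¹ * (braidGen ⟨a,ha⟩)⁻¹ * (braidGen ⟨a+1,h⟩)⁻¹ = 1 := this
  rw [mul_inv_eq_one, mul_inv_eq_iff_eq_mul, mul_inv_eq_iff_eq_mul] at h2
  exact h2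

/-- The descending product `σ_{j-1} ⋯ σ_i`. -/
def w (i j : ℕ) : BraidGroup m := ((List.Ico i j).map σ).reverse.prod

/-- The pure braid generator `T i j = w⁻¹ σ_j² w`. -/
def T (i j : ℕ) : BraidGroup m := (w i j)⁻¹ * σ j ^ 2 * w i j

lemma w_self (i : ℕ) : w (m := m) i i = 1 := by simp [w]

lemma T_self (i : ℕ) : T (m := m) i i = σ i ^ 2 := by simp [T, w_self]

lemma w_left {i j : ℕ} (h : i < j) : w (m := m) i j = w (i+1) j * σ i := by
  rw [w, w, List.Ico.eq_cons h]
  simp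

lemma w_right {i j : ℕ} (h : i ≤ j) : w (m := m) i (j+1) = σ j * w i j := by
  rw [w, w, List.Ico.succ_top h]
  simp

lemma w_split {i t j : ℕ} (h1 : i ≤ t) (h2 : t ≤ j) :
    w (m := m) i j = w t j * w i t := by
  rw [w, w, w, ← List.Ico.append_consecutive h1 h2]
  simp

lemma commute_w {s i j : ℕ} (h : ∀ t, i ≤ t → t < j → Commute (σ s) (σ t)) :
    Commute (σ s) (w (m := m) i j) := by
  apply Commute.list_prod_right
  intro y hy
  rw [List.mem_reverse, List.mem_map] at hy
  obtain ⟨t, ht, rfl⟩ := hy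
  rw [List.Ico.mem] at ht
  exact h t ht.1 ht.2

lemma commute_w_left {s i j : ℕ} (h : s + 2 ≤ i) : Commute (σ s) (w (m := m) i j) :=
  commute_w fun t ht _ => commute_gen (by omega)

lemma commute_w_right {s i j : ℕ} (h : j + 1 ≤ s) : Commute (σ s) (w (m := m) i j) :=
  commute_w fun t _ ht => (commute_gen (a := t) (by omega)).symm


section TwoGen
variable {G : Type*} [Group G] {a b : G} (h : a * b * a = b * a * b)
include h

lemma tg_c0 : a⁻¹ * b * a = b * a * b⁻¹ := by
  apply mul_left_cancel (a := a)
  apply mul_right_cancel (b := b)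
  calc a * (a⁻¹ * b * a) * b = b * a * b := by group <;> simp [pow_two, zpow_two, mul_assoc]
  _ = a * b * a := h.symm
  _ = a * (b * a * b⁻¹) * b := by group <;> simp [pow_two, zpow_two, mul_assoc]

lemma tg_c2 : a⁻¹ * b ^ 2 * a = b * a ^ 2 * b⁻¹ := by
  have e : a⁻¹ * b ^ 2 * a = (a⁻¹ * b * a) * (a⁻¹ * b * a) := by group <;> simp [pow_two, zpow_two, mul_assoc]
  rw [e, tg_c0 h]; group <;> simp [pow_two, zpow_two, mul_assoc]

lemma tg_c0' : b⁻¹ * a * b = a * b * a⁻¹ := by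
  apply mul_left_cancel (a := b)
  apply mul_right_cancel (b := a)
  calc b * (b⁻¹ * a * b) * a = a * b * a := by group <;> simp [pow_two, zpow_two, mul_assoc]
  _ = b * a * b := h
  _ = b * (a * b * a⁻¹) * a := by group <;> simp [pow_two, zpow_two, mul_assoc]

lemma tg_c2' : b⁻¹ * a ^ 2 * b = a * b ^ 2 * a⁻¹ := by
  have e : b⁻¹ * a ^ 2 * b = (b⁻¹ * a * b) * (b⁻¹ * a * b) := by group <;> simp [pow_two, zpow_two, mul_assoc]
  rw [e, tg_c0' h]; group <;> simp [pow_two, zpow_two, mul_assoc]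

lemma tg_c3 : b⁻¹ * a⁻¹ * b ^ 2 * a * b = a ^ 2 := by
  have e : b⁻¹ * a⁻¹ * b ^ 2 * a * b = b⁻¹ * (a⁻¹ * b ^ 2 * a) * b := by group <;> simp [pow_two, zpow_two, mul_assoc]
  rw [e, tg_c2 h]; group <;> simp [pow_two, zpow_two, mul_assoc]

lemma tg_c4 : b * a⁻¹ * b ^ 2 * a * b⁻¹ = b ^ 2 * a ^ 2 * b⁻¹ ^ 2 := by
  have e : b * a⁻¹ * b ^ 2 * a * b⁻¹ = b * (a⁻¹ * b ^ 2 * a) * b⁻¹ := by group <;> simp [pow_two, zpow_two, mul_assoc]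
  rw [e, tg_c2 h]; group <;> simp [pow_two, zpow_two, mul_assoc]

lemma tg_c5 : b * a ^ 2 * b⁻¹ = a⁻¹ * b ^ 2 * a := (tg_c2 h).symm

end TwoGen

/-- `w i j * σ (t+1) = σ t * w i j` when `i ≤ t < t+1 < j ≤ m`. -/
lemma w_mul_gen {i t j : ℕ} (h1 : i ≤ t) (h2 : t + 1 < j) (hm : j ≤ m) :
    w (m := m) i j * σ (t+1) = σ t * w i j := by
  have c1 : w (m := m) i t * σ (t+1) = σ (t+1) * w i t :=
    ((commute_w_right (by omega)).eq).symm
  have c2 : σ t * w (m := m) (t+1+1) j = w (t+1+1) j * σ t :=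
    (commute_w_left (by omega)).eq
  have br : σ t * σ (t+1) * σ t = σ (t+1) * σ t * σ (t+1) := braid_rel (by omega)
  have e1 : w (m := m) i j = w (t+1+1) j * (σ (t+1) * (σ t * w i t)) := by
    rw [w_split (show i ≤ t+1+1 by omega) (show t+1+1 ≤ j by omega),
        w_right (show i ≤ t+1 by omega), w_right (show i ≤ t by omega)]
  rw [e1]
  calc w (t+1+1) j * (σ (t+1) * (σ t * w i t)) * σ (t+1)
      = w (t+1+1) j * (σ (t+1) * (σ t * (w i t * σ (t+1)))) := by simp [mul_assoc]
    _ = w (t+1+1) j * (σ (t+1) * (σ t * (σ (t+1) * w i t))) := by rw [c1]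
    _ = w (t+1+1) j * ((σ (t+1) * σ t * σ (t+1)) * w i t) := by simp [mul_assoc]
    _ = w (t+1+1) j * ((σ t * σ (t+1) * σ t) * w i t) := by rw [br]
    _ = w (t+1+1) j * σ t * (σ (t+1) * (σ t * w i t)) := by simp [mul_assoc]
    _ = σ t * w (t+1+1) j * (σ (t+1) * (σ t * w i t)) := by rw [← c2]
    _ = σ t * (w (t+1+1) j * (σ (t+1) * (σ t * w i t))) := by simp [mul_assoc]

lemma conj_conj {G : Type*} [Group G] {u v : G} (h : Commute u v) (X : G) :
    u * (v⁻¹ * X * v) * u⁻¹ = v⁻¹ * (u * X * u⁻¹) * v := by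
  have m1 : u * v⁻¹ = v⁻¹ * u := h.inv_right.eq
  have m2 : v * u⁻¹ = u⁻¹ * v := h.inv_left.eq.symm
  calc u * (v⁻¹ * X * v) * u⁻¹ = (u * v⁻¹) * X * (v * u⁻¹) := by simp [mul_assoc]
    _ = (v⁻¹ * u) * X * (u⁻¹ * v) := by rw [m1, m2]
    _ = v⁻¹ * (u * X * u⁻¹) * v := by simp [mul_assoc]

lemma conj_conj' {G : Type*} [Group G] {u v : G} (h : Commute u v) (X : G) :
    u⁻¹ * (v⁻¹ * X * v) * u = v⁻¹ * (u⁻¹ * X * u) * v := by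
  have m1 : u⁻¹ * v⁻¹ = v⁻¹ * u⁻¹ := (h.inv_left.inv_right).eq
  have m2 : v * u = u * v := h.eq.symm
  calc u⁻¹ * (v⁻¹ * X * v) * u = (u⁻¹ * v⁻¹) * X * (v * u) := by simp [mul_assoc]
    _ = (v⁻¹ * u⁻¹) * X * (u * v) := by rw [m1, m2]
    _ = v⁻¹ * (u⁻¹ * X * u) * v := by simp [mul_assoc]

lemma conj_eq_of_commute {G : Type*} [Group G] {u v : G} (h : Commute u v) :
    u⁻¹ * v * u = v := by
  apply mul_left_cancel (a := u)
  calc u * (u⁻¹ * v * u) = v * u := by group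
    _ = u * v := h.eq.symm

lemma conj_eq_of_commute' {G : Type*} [Group G] {u v : G} (h : Commute u v) :
    u * v * u⁻¹ = v := by
  apply mul_right_cancel (b := u)
  calc u * v * u⁻¹ * u = u * v := by group
    _ = v * u := h.eq

lemma T_peel {i j : ℕ} (h : i < j) :
    T (m := m) i j = (σ i)⁻¹ * T (i+1) j * σ i := by
  simp only [T, w_left h]
  group

lemma commute_T_far {s i j : ℕ} (hij : i ≤ j) (h : s + 2 ≤ i ∨ j + 2 ≤ s) :
    Commute (σ s) (T (m := m) i j) := by
  have hw : Commute (σ s) (w (m := m) i j) :=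
    h.elim (fun h => commute_w_left h) (fun h => commute_w_right (by omega))
  have hg : Commute (σ s) (σ j) :=
    h.elim (fun h => commute_gen (by omega)) (fun h => (commute_gen (by omega)).symm)
  unfold T
  exact (hw.inv_right.mul_right (hg.pow_right 2)).mul_right hw

lemma commute_T_self (i : ℕ) : Commute (σ i) (T (m := m) i i) := by
  rw [T_self]; exact (Commute.refl _).pow_right 2

lemma commute_T_mid {i t j : ℕ} (h1 : i ≤ t) (h2 : t + 1 < j) (hm : j ≤ m) :
    Commute (σ (t+1)) (T (m := m) i j) := by
  have e1 := w_mul_gen (m := m) h1 h2 hm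
  have m1 : σ (t+1) * (w (m := m) i j)⁻¹ = (w i j)⁻¹ * σ t := by
    apply mul_left_cancel (a := w (m := m) i j)
    calc w (m := m) i j * (σ (t+1) * (w i j)⁻¹) = (w i j * σ (t+1)) * (w i j)⁻¹ := by
          simp [mul_assoc]
      _ = (σ t * w i j) * (w i j)⁻¹ := by rw [e1]
      _ = w i j * ((w i j)⁻¹ * σ t) := by group
  show σ (t+1) * T i j = T i j * σ (t+1)
  unfold T
  calc σ (t+1) * ((w i j)⁻¹ * σ j ^ 2 * w i j)
      = (σ (t+1) * (w i j)⁻¹) * σ j ^ 2 * w i j := by simp [mul_assoc]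
    _ = ((w i j)⁻¹ * σ t) * σ j ^ 2 * w i j := by rw [m1]
    _ = (w i j)⁻¹ * (σ t * σ j ^ 2) * w i j := by simp [mul_assoc]
    _ = (w i j)⁻¹ * (σ j ^ 2 * σ t) * w i j := by
          rw [((commute_gen (show t+2 ≤ j by omega)).pow_right 2).eq]
    _ = (w i j)⁻¹ * σ j ^ 2 * (σ t * w i j) := by simp [mul_assoc]
    _ = (w i j)⁻¹ * σ j ^ 2 * (w i j * σ (t+1)) := by rw [← e1]
    _ = ((w i j)⁻¹ * σ j ^ 2 * w i j) * σ (t+1) := by simp [mul_assoc]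

lemma conjL_top {i t : ℕ} (h : i ≤ t) (hm : t + 1 < m) :
    (σ (t+1))⁻¹ * T i (t+1) * σ (t+1) = T (m := m) i t := by
  have cw : Commute (σ (t+1)) (w (m := m) i t) := commute_w_right (by omega)
  have key : (σ (t+1))⁻¹ * ((σ t)⁻¹ * σ (t+1) ^ 2 * σ t) * σ (t+1) = σ t ^ 2 := by
    have h3 := tg_c3 (braid_rel (show t + 1 < m from hm))
    rw [← h3]; group
  have e : T (m := m) i (t+1) = (w i t)⁻¹ * ((σ t)⁻¹ * σ (t+1) ^ 2 * σ t) * w i t := by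
    simp only [T, w_right h]
    group
  rw [e, conj_conj' cw ((σ t)⁻¹ * σ (t+1) ^ 2 * σ t), key]
  rfl

lemma conjR_top {i t : ℕ} (h : i ≤ t) (hm : t + 1 < m) :
    σ (t+1) * T i (t+1) * (σ (t+1))⁻¹ = T (t+1) (t+1) * T (m := m) i t * (T (t+1) (t+1))⁻¹ := by
  have cw : Commute (σ (t+1)) (w (m := m) i t) := commute_w_right (by omega)
  have h4 := tg_c4 (braid_rel (show t + 1 < m from hm))
  have key4 : σ (t+1) * ((σ t)⁻¹ * σ (t+1) ^ 2 * σ t) * (σ (t+1))⁻¹ =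
      σ (t+1) ^ 2 * σ t ^ 2 * (σ (t+1) ^ 2)⁻¹ := by
    calc σ (t+1) * ((σ t)⁻¹ * σ (t+1) ^ 2 * σ t) * (σ (t+1))⁻¹
        = σ (t+1) * (σ t)⁻¹ * σ (t+1) ^ 2 * σ t * (σ (t+1))⁻¹ := by group
      _ = σ (t+1) ^ 2 * σ t ^ 2 * (σ (t+1))⁻¹ ^ 2 := h4
      _ = σ (t+1) ^ 2 * σ t ^ 2 * (σ (t+1) ^ 2)⁻¹ := by group
  have e : T (m := m) i (t+1) = (w i t)⁻¹ * ((σ t)⁻¹ * σ (t+1) ^ 2 * σ t) * w i t := by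
    simp only [T, w_right h]
    group
  rw [e, conj_conj cw ((σ t)⁻¹ * σ (t+1) ^ 2 * σ t), key4, T_self,
    show T (m := m) i t = (w i t)⁻¹ * σ t ^ 2 * w i t from rfl,
    conj_conj (cw.pow_left 2) (σ t ^ 2)]

lemma conjR_succ {i j : ℕ} (hij : i ≤ j) (hm : j + 1 < m) :
    σ (j+1) * T i j * (σ (j+1))⁻¹ = T (m := m) i (j+1) := by
  have cw : Commute (σ (j+1)) (w (m := m) i j) := commute_w_right (by omega)
  have key5 : σ (j+1) * σ j ^ 2 * (σ (j+1))⁻¹ = (σ j)⁻¹ * σ (j+1) ^ 2 * σ j :=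
    tg_c5 (braid_rel hm)
  have e2 : T (m := m) i (j+1) = (w i j)⁻¹ * ((σ j)⁻¹ * σ (j+1) ^ 2 * σ j) * w i j := by
    simp only [T, w_right hij]
    group
  rw [e2, show T (m := m) i j = (w i j)⁻¹ * σ j ^ 2 * w i j from rfl,
    conj_conj cw (σ j ^ 2), key5]

lemma conjL_succ {i j : ℕ} (hij : i ≤ j) (hm : j + 1 < m) :
    (σ (j+1))⁻¹ * T i j * σ (j+1) = T i j * T i (j+1) * (T (m := m) i j)⁻¹ := by
  have cw : Commute (σ (j+1)) (w (m := m) i j) := commute_w_right (by omega)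
  have key6 : (σ (j+1))⁻¹ * σ j ^ 2 * σ (j+1) = σ j * σ (j+1) ^ 2 * (σ j)⁻¹ :=
    tg_c2' (braid_rel hm)
  have e2 : T (m := m) i (j+1) = (w i j)⁻¹ * ((σ j)⁻¹ * σ (j+1) ^ 2 * σ j) * w i j := by
    simp only [T, w_right hij]
    group
  have rhs : T i j * T i (j+1) * (T (m := m) i j)⁻¹ =
      (w i j)⁻¹ * (σ j * σ (j+1) ^ 2 * (σ j)⁻¹) * w i j := by
    rw [e2]
    simp only [T]
    group
  rw [rhs, show T (m := m) i j = (w i j)⁻¹ * σ j ^ 2 * w i j from rfl,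
    conj_conj' cw (σ j ^ 2), key6]

lemma conjR_peel {s j : ℕ} (h : s < j) :
    σ s * T (m := m) s j * (σ s)⁻¹ = T (s+1) j := by
  rw [T_peel h]; group

lemma conjR_peel' {s j : ℕ} (h : s < j) :
    σ s * T (s+1) j * (σ s)⁻¹ = T s s * T (m := m) s j * (T s s)⁻¹ := by
  rw [T_peel h, T_self]; group <;> simp [pow_two, zpow_two, mul_assoc]

lemma conjL_diag {s j : ℕ} (h : s < j) :
    (σ s)⁻¹ * T (m := m) s j * σ s = (T s s)⁻¹ * T (s+1) j * T s s := by
  rw [T_peel h, T_self]; group <;> simp [pow_two, zpow_two, mul_assoc]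

variable {k : Type*} [Field k] {M : Type*} [AddCommGroup M] [Module k M]
  [DistribMulAction (BraidGroup m) M] [SMulCommClass (BraidGroup m) k M]

/-- Auxiliary predicate: all `ψ`-conjugates of the `T i j` act on `x` by `c`. -/
def Pred (x : M) (c : k) (ψ : BraidGroup m) : Prop :=
  ∀ i j, i ≤ j → j < m → (ψ⁻¹ * T (m := m) i j * ψ) • x = c • x

lemma main (x : M) (ζ : kˣ)
    (hT : ∀ i j, i ≤ j → j < m → T (m := m) i j • x = ((ζ:k)^2) • x) :
    ∀ (φ : BraidGroup m) (i j : ℕ), i ≤ j → j < m →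
      (φ⁻¹ * T i j * φ) • x = ((ζ:k)^2) • x := by
  set c : k := ((ζ:k)^2) with hc_def
  have hc : c ≠ 0 := pow_ne_zero _ ζ.ne_zero
  have hinv : ∀ g : BraidGroup m, g • x = c • x → g⁻¹ • x = c⁻¹ • x := by
    intro g hg
    have h1 : g⁻¹ • (g • x) = g⁻¹ • (c • x) := by rw [hg]
    rw [inv_smul_smul, smul_comm] at h1
    calc g⁻¹ • x = c⁻¹ • (c • (g⁻¹ • x)) := by
          rw [smul_smul, inv_mul_cancel₀ hc, one_smul]
      _ = c⁻¹ • x := by rw [← h1]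
  have Pconj : ∀ g h : BraidGroup m, g • x = c • x → h • x = c • x →
      (h * g * h⁻¹) • x = c • x := by
    intro g h hg hh
    rw [mul_smul, mul_smul, hinv h hh, smul_comm g c⁻¹ x, hg, smul_smul,
      inv_mul_cancel₀ hc, one_smul, hh]
  have Pconj' : ∀ g h : BraidGroup m, g • x = c • x → h • x = c • x →
      (h⁻¹ * g * h) • x = c • x := by
    intro g h hg hh
    rw [mul_smul, mul_smul, hh, smul_comm g c x, hg, smul_comm h⁻¹ c, smul_comm h⁻¹ c,
      hinv h hh, smul_smul, smul_smul, mul_inv_cancel_right₀ hc]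
  intro φ
  have base : Pred x c (1 : BraidGroup m) := by
    intro i j hij hj
    simpa using hT i j hij hj
  have hφ : φ ∈ Submonoid.closure
      ((Set.range (PresentedGroup.of : Fin m → BraidGroup m)) ∪
        (Set.range (PresentedGroup.of : Fin m → BraidGroup m))⁻¹) := by
    rw [← Subgroup.closure_toSubmonoid, Subgroup.mem_toSubmonoid,
      PresentedGroup.closure_range_of]
    exact Subgroup.mem_top φ
  have step : ∀ g ∈ ((Set.range (PresentedGroup.of : Fin m → BraidGroup m)) ∪
        (Set.range (PresentedGroup.of : Fin m → BraidGroup m))⁻¹),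
      ∀ ψ, Pred x c ψ → Pred x c (g * ψ) := by
    rintro g (⟨a, rfl⟩ | hg') ψ hψ
    · -- g = of a = σ s
      obtain ⟨s, hs, hga⟩ : ∃ s, s < m ∧ (PresentedGroup.of a : BraidGroup m) = σ s :=
        ⟨a, a.isLt, (braidGenNat_of a.isLt).symm⟩
      rw [hga]
      intro i j hij hj
      have re : (σ s * ψ)⁻¹ * T i j * (σ s * ψ) =
          ψ⁻¹ * ((σ s)⁻¹ * T (m := m) i j * σ s) * ψ := by group
      rw [re]
      rcases (show s + 2 ≤ i ∨ j + 2 ≤ s ∨ s + 1 = i ∨ (s = i ∧ i = j) ∨ (s = i ∧ i < j) ∨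
          (i < s ∧ s < j) ∨ (s = j ∧ i < j) ∨ s = j + 1 by omega) with
        h|h|h|⟨h1,h2⟩|⟨h1,h2⟩|⟨h1,h2⟩|⟨h1,h2⟩|h
      · rw [conj_eq_of_commute (commute_T_far hij (Or.inl h))]; exact hψ i j hij hj
      · rw [conj_eq_of_commute (commute_T_far hij (Or.inr h))]; exact hψ i j hij hj
      · rw [← h, ← T_peel (show s < j by omega)]
        exact hψ s j (by omega) hj
      · have hcomm : Commute (σ s) (T (m := m) i j) := by
          rw [← h2, ← h1]; exact commute_T_self s
        rw [conj_eq_of_commute hcomm]; exact hψ i j hij hj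
      · rw [h1]
        rw [conjL_diag h2]
        have re2 : ψ⁻¹ * ((T (m := m) i i)⁻¹ * T (i+1) j * T i i) * ψ =
            (ψ⁻¹ * T i i * ψ)⁻¹ * (ψ⁻¹ * T (i+1) j * ψ) * (ψ⁻¹ * T i i * ψ) := by group
        rw [re2]
        exact Pconj' _ _ (hψ (i+1) j (by omega) hj) (hψ i i le_rfl (by omega))
      · obtain ⟨t, rfl⟩ : ∃ t, s = t + 1 := ⟨s - 1, by omega⟩
        rw [conj_eq_of_commute (commute_T_mid (show i ≤ t by omega) h2 (by omega))]
        exact hψ i j hij hj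
      · rw [h1]
        obtain ⟨t, rfl⟩ : ∃ t, j = t + 1 := ⟨j - 1, by omega⟩
        rw [conjL_top (show i ≤ t by omega) hj]
        exact hψ i t (by omega) (by omega)
      · subst h
        rw [conjL_succ hij hs]
        have re2 : ψ⁻¹ * (T i j * T i (j+1) * (T (m := m) i j)⁻¹) * ψ =
            (ψ⁻¹ * T i j * ψ) * (ψ⁻¹ * T i (j+1) * ψ) * (ψ⁻¹ * T i j * ψ)⁻¹ := by group
        rw [re2]
        exact Pconj _ _ (hψ i (j+1) (by omega) hs) (hψ i j hij hj)
    · -- g = (of a)⁻¹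
      rw [Set.mem_inv] at hg'
      obtain ⟨a, ha⟩ := hg'
      obtain ⟨s, hs, hga⟩ : ∃ s, s < m ∧ g = (σ s)⁻¹ :=
        ⟨a, a.isLt, by rw [← inv_inv g, ← ha, braidGenNat_of a.isLt]; rfl⟩
      rw [hga]
      intro i j hij hj
      have re : ((σ s)⁻¹ * ψ)⁻¹ * T i j * ((σ s)⁻¹ * ψ) =
          ψ⁻¹ * (σ s * T (m := m) i j * (σ s)⁻¹) * ψ := by group
      rw [re]
      rcases (show s + 2 ≤ i ∨ j + 2 ≤ s ∨ s + 1 = i ∨ (s = i ∧ i = j) ∨ (s = i ∧ i < j) ∨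
          (i < s ∧ s < j) ∨ (s = j ∧ i < j) ∨ s = j + 1 by omega) with
        h|h|h|⟨h1,h2⟩|⟨h1,h2⟩|⟨h1,h2⟩|⟨h1,h2⟩|h
      · rw [conj_eq_of_commute' (commute_T_far hij (Or.inl h))]; exact hψ i j hij hj
      · rw [conj_eq_of_commute' (commute_T_far hij (Or.inr h))]; exact hψ i j hij hj
      · rw [← h, conjR_peel' (show s < j by omega)]
        have re2 : ψ⁻¹ * (T s s * T s j * (T (m := m) s s)⁻¹) * ψ =
            (ψ⁻¹ * T s s * ψ) * (ψ⁻¹ * T s j * ψ) * (ψ⁻¹ * T s s * ψ)⁻¹ := by group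
        rw [re2]
        exact Pconj _ _ (hψ s j (by omega) hj) (hψ s s le_rfl (by omega))
      · have hcomm : Commute (σ s) (T (m := m) i j) := by
          rw [← h2, ← h1]; exact commute_T_self s
        rw [conj_eq_of_commute' hcomm]; exact hψ i j hij hj
      · rw [h1, conjR_peel h2]
        exact hψ (i+1) j (by omega) hj
      · obtain ⟨t, rfl⟩ : ∃ t, s = t + 1 := ⟨s - 1, by omega⟩
        rw [conj_eq_of_commute' (commute_T_mid (show i ≤ t by omega) h2 (by omega))]
        exact hψ i j hij hj
      · rw [h1]
        obtain ⟨t, rfl⟩ : ∃ t, j = t + 1 := ⟨j - 1, by omega⟩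
        rw [conjR_top (show i ≤ t by omega) hj]
        have re2 : ψ⁻¹ * (T (t+1) (t+1) * T i t * (T (m := m) (t+1) (t+1))⁻¹) * ψ =
            (ψ⁻¹ * T (t+1) (t+1) * ψ) * (ψ⁻¹ * T i t * ψ) * (ψ⁻¹ * T (t+1) (t+1) * ψ)⁻¹ := by
          group
        rw [re2]
        exact Pconj _ _ (hψ i t (by omega) (by omega)) (hψ (t+1) (t+1) le_rfl hj)
      · subst h
        rw [conjR_succ hij hs]
        exact hψ i (j+1) (by omega) hs
  have key : ∀ ψ, Pred x c ψ → Pred x c (φ * ψ) := Submonoid.closure_induction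
    (motive := fun g _ => ∀ ψ, Pred x c ψ → Pred x c (g * ψ)) step
    (fun ψ h => by simpa using h)
    (fun a b _ _ ha hb ψ h => by rw [mul_assoc]; exact ha _ (hb _ h)) hφ
  have hQφ := key 1 base
  rw [mul_one] at hQφ
  exact hQφ

end BG

/-- For a `k[B_n]`-module `M` and a unit `ζ`, the subspace
`M(ζ) = {m | φ⁻¹ τ_i² φ (m) = ζ² m ∀ φ, i}` coincides with
`{m | τ_i⁻¹ τ_{i+1}⁻¹ ⋯ τ_{j-1}⁻¹ τ_j² τ_{j-1} ⋯ τ_{i+1} τ_i (m) = ζ² m for all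
1 ≤ i ≤ j ≤ n−1}`.  Here (with `0`-indexed generators `braidGenNat (n-1) 0, …`)
`τ_{j-1} ⋯ τ_i` is the product of the generators with indices in `[i, j)` in descending
order. -/
theorem stmt10 (k : Type*) [Field k] (n : ℕ) (hn : 2 ≤ n) (M : Type*) [AddCommGroup M]
    [Module k M] [DistribMulAction (BraidGroup (n - 1)) M]
    [SMulCommClass (BraidGroup (n - 1)) k M] (ζ : kˣ) :
    (Mzeta k (n - 1) M ζ : Set M) =
      {x : M | ∀ i j : ℕ, i ≤ j → j < n - 1 →
        ((((List.Ico i j).map (braidGenNat (n - 1))).reverse.prod)⁻¹ *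
            braidGenNat (n - 1) j ^ 2 *
            (((List.Ico i j).map (braidGenNat (n - 1))).reverse.prod)) • x =
          ((ζ : k) ^ 2) • x} := by
  apply Set.ext
  intro x
  constructor
  · intro hx i j hij hj
    have h1 := hx (BG.w (m := n-1) i j) ⟨j, hj⟩
    rw [← BG.braidGenNat_of hj] at h1
    exact h1
  · intro hx φ i
    have hT : ∀ a b : ℕ, a ≤ b → b < n - 1 →
        BG.T (m := n-1) a b • x = ((ζ:k)^2) • x := fun a b hab hb => hx a b hab hb
    have hmain := BG.main x ζ hT φ (i : ℕ) (i : ℕ) le_rfl i.isLt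
    have e : BG.T (m := n-1) (i : ℕ) (i : ℕ) = braidGen i ^ 2 := by
      rw [BG.T_self, BG.braidGenNat_of i.isLt]
    rw [e] at hmain
    exact hmain
end

section
/- If ζ is a primitive n-th root of unity in a field k and 0 < i < n, then Σ_{t≥0} p(i, n−i, t)·ζ^{−t} = 0, i.e., the Gaussian binomial coefficient C(n, i)_q vanishes at q = ζ⁻¹. -/
open Multiset

lemma card_le_sum_ms {s : Multiset ℕ} (hs : ∀ x ∈ s, 0 < x) : Multiset.card s ≤ s.sum := by
  induction s using Multiset.induction with
  | empty => simp
  | cons a s ih =>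
    have ha : 0 < a := hs a (mem_cons_self a s)
    have := ih (fun x hx => hs x (mem_cons_of_mem hx))
    simp only [card_cons, sum_cons]
    omega

lemma sum_map_pred {s : Multiset ℕ} (hs : ∀ x ∈ s, 0 < x) :
    (s.map (· - 1)).sum = s.sum - Multiset.card s := by
  induction s using Multiset.induction with
  | empty => simp
  | cons a s ih =>
    have ha : 0 < a := hs a (mem_cons_self a s)
    have hs' : ∀ x ∈ s, 0 < x := fun x hx => hs x (mem_cons_of_mem hx)
    have h2 := card_le_sum_ms hs'
    simp only [map_cons, sum_cons, card_cons, ih hs']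
    omega

lemma sum_map_succ (s : Multiset ℕ) :
    (s.map (· + 1)).sum = s.sum + Multiset.card s := by
  induction s using Multiset.induction with
  | empty => simp
  | cons a s ih => simp only [map_cons, sum_cons, card_cons, ih]; omega

lemma sum_filter_ne_zero_ms (s : Multiset ℕ) : (s.filter (· ≠ 0)).sum = s.sum := by
  induction s using Multiset.induction with
  | empty => simp
  | cons a s ih =>
    by_cases h : a = 0
    · subst h; rw [Multiset.filter_cons_of_neg _ (by simp), Multiset.sum_cons, ih]; omega
    · rw [Multiset.filter_cons_of_pos _ (by simpa using h), Multiset.sum_cons,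
        Multiset.sum_cons, ih]

lemma ms_restore {s : Multiset ℕ} (hs : ∀ x ∈ s, 0 < x) :
    ((s.map (· - 1)).filter (· ≠ 0)).map (· + 1) + Multiset.replicate (s.count 1) 1 = s := by
  induction s using Multiset.induction with
  | empty => simp
  | cons a s ih =>
    have ha : 0 < a := hs a (mem_cons_self a s)
    have hs' : ∀ x ∈ s, 0 < x := fun x hx => hs x (mem_cons_of_mem hx)
    rcases eq_or_lt_of_le (show 1 ≤ a from ha) with h1 | h2
    · -- a = 1
      have ha1 : a = 1 := h1.symm
      subst ha1
      rw [map_cons]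
      rw [Multiset.filter_cons_of_neg _ (by simp)]
      rw [count_cons_self, replicate_succ]
      rw [add_cons, ih hs']
    · -- a ≥ 2
      rw [map_cons, Multiset.filter_cons_of_pos _ (by omega), map_cons,
        count_cons_of_ne (by omega), cons_add, ih hs']
      congr 1
      omega

lemma card_filter_pred {s : Multiset ℕ} (hs : ∀ x ∈ s, 0 < x) :
    Multiset.card ((s.map (· - 1)).filter (· ≠ 0)) = Multiset.card s - s.count 1 := by
  have h := congrArg Multiset.card (ms_restore hs)
  have hc : s.count 1 ≤ Multiset.card s := count_le_card 1 s
  simp only [card_add, card_map, card_replicate] at h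
  omega

noncomputable def Npart (i j t : ℕ) : ℕ :=
  Nat.card {p : Nat.Partition t // Multiset.card p.parts ≤ j ∧ ∀ x ∈ p.parts, x ≤ i}

lemma card_split {α : Type*} [Finite α] (P Q : α → Prop) :
    Nat.card {a // P a} = Nat.card {a // P a ∧ Q a} + Nat.card {a // P a ∧ ¬ Q a} := by
  classical
  rw [← Nat.card_sum]
  apply Nat.card_congr
  refine ⟨fun a => if h : Q a then .inl ⟨a, a.2, h⟩ else .inr ⟨a, a.2, h⟩,
    Sum.elim (fun a => ⟨a.1, a.2.1⟩) (fun a => ⟨a.1, a.2.1⟩), ?_, ?_⟩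
  · intro a; by_cases h : Q a <;> simp [h]
  · rintro (a | a)
    · simp [a.2.2]
    · simp [a.2.2]

lemma Npart_zero {i j t : ℕ} (h : i * j < t) : Npart i j t = 0 := by
  have : IsEmpty {p : Nat.Partition t // Multiset.card p.parts ≤ j ∧ ∀ x ∈ p.parts, x ≤ i} := by
    constructor
    rintro ⟨p, hc, hb⟩
    have h1 : p.parts.sum ≤ Multiset.card p.parts • i := Multiset.sum_le_card_nsmul _ _ hb
    have h2 := p.parts_sum
    have h3 : Multiset.card p.parts * i ≤ j * i := Nat.mul_le_mul_right i hc
    simp only [smul_eq_mul] at h1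
    nlinarith [h2, h1, h3]
  simp [Npart, Nat.card_of_isEmpty]

lemma Npart_small_i {i i' j t : ℕ} (h1 : t ≤ i') (h2 : i' ≤ i) : Npart i j t = Npart i' j t := by
  apply Nat.card_congr
  apply Equiv.subtypeEquivRight
  intro p
  constructor
  · rintro ⟨hc, hb⟩
    refine ⟨hc, fun x hx => ?_⟩
    have := Multiset.single_le_sum (fun x _ => Nat.zero_le x) x hx
    rw [p.parts_sum] at this
    omega
  · rintro ⟨hc, hb⟩
    exact ⟨hc, fun x hx => le_trans (hb x hx) h2⟩

lemma Npart_small_j {i j j' t : ℕ} (h1 : t ≤ j') (h2 : j' ≤ j) : Npart i j t = Npart i j' t := by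
  apply Nat.card_congr
  apply Equiv.subtypeEquivRight
  intro p
  have hcs : Multiset.card p.parts ≤ p.parts.sum := card_le_sum_ms (fun x hx => p.parts_pos hx)
  rw [p.parts_sum] at hcs
  constructor
  · rintro ⟨hc, hb⟩; exact ⟨by omega, hb⟩
  · rintro ⟨hc, hb⟩; exact ⟨by omega, hb⟩


lemma recA (i j t : ℕ) (hi : 1 ≤ i) (hj : 1 ≤ j) (ht : i ≤ t) :
    Npart i j t = Npart (i-1) j t + Npart i (j-1) (t-i) := by
  obtain ⟨u, rfl⟩ : ∃ u, t = i + u := ⟨t - i, by omega⟩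
  rw [Nat.add_sub_cancel_left]
  rw [Npart, card_split _ (fun p => i ∉ p.parts)]
  congr 1
  · -- no part equal to i
    apply Nat.card_congr
    apply Equiv.subtypeEquivRight
    intro p
    constructor
    · rintro ⟨⟨hc, hb⟩, hmem⟩
      refine ⟨hc, fun x hx => ?_⟩
      have h1 := hb x hx
      have h2 : x ≠ i := fun e => hmem (e ▸ hx)
      omega
    · rintro ⟨hc, hb⟩
      refine ⟨⟨hc, fun x hx => le_trans (hb x hx) (by omega)⟩, fun hmem => ?_⟩
      have := hb i hmem
      omega
  · -- a part equal to i : remove it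
    apply Nat.card_congr
    refine ⟨fun p => ⟨⟨p.1.parts.erase i, ?_, ?_⟩, ?_, ?_⟩,
      fun m => ⟨⟨i ::ₘ m.1.parts, ?_, ?_⟩, ⟨?_, ?_⟩, ?_⟩, ?_, ?_⟩
    · intro x hx
      exact p.1.parts_pos (Multiset.mem_of_mem_erase hx)
    · have hmem : i ∈ p.1.parts := not_not.mp p.2.2
      have h := congrArg Multiset.sum (Multiset.cons_erase hmem)
      rw [Multiset.sum_cons, p.1.parts_sum] at h
      omega
    · show Multiset.card (p.1.parts.erase i) ≤ j - 1
      have hmem : i ∈ p.1.parts := not_not.mp p.2.2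
      have h := congrArg Multiset.card (Multiset.cons_erase hmem)
      rw [Multiset.card_cons] at h
      have := p.2.1.1
      omega
    · intro x hx
      exact p.2.1.2 x (Multiset.mem_of_mem_erase hx)
    · intro x hx
      rcases Multiset.mem_cons.mp hx with rfl | hx
      · omega
      · exact m.1.parts_pos hx
    · rw [Multiset.sum_cons, m.1.parts_sum]
    · show Multiset.card (i ::ₘ m.1.parts) ≤ j
      rw [Multiset.card_cons]
      have := m.2.1
      omega
    · intro x hx
      rcases Multiset.mem_cons.mp hx with rfl | hx
      · exact le_refl x
      · exact m.2.2 x hx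
    · intro h
      exact h (Multiset.mem_cons_self i _)
    · intro p
      apply Subtype.ext
      apply Nat.Partition.ext
      exact Multiset.cons_erase (not_not.mp p.2.2)
    · intro m
      apply Subtype.ext
      apply Nat.Partition.ext
      exact Multiset.erase_cons_head i _

lemma recB (i j t : ℕ) (hi : 1 ≤ i) (hj : 1 ≤ j) (ht : j ≤ t) :
    Npart i j t = Npart i (j-1) t + Npart (i-1) j (t-j) := by
  obtain ⟨u, rfl⟩ : ∃ u, t = j + u := ⟨t - j, by omega⟩
  rw [Nat.add_sub_cancel_left]
  rw [Npart, card_split _ (fun p => Multiset.card p.parts ≤ j - 1)]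
  congr 1
  · apply Nat.card_congr
    apply Equiv.subtypeEquivRight
    intro p
    constructor
    · rintro ⟨⟨_, hb⟩, hc⟩; exact ⟨hc, hb⟩
    · rintro ⟨hc, hb⟩; exact ⟨⟨by omega, hb⟩, hc⟩
  · -- exactly j parts
    apply Nat.card_congr
    refine ⟨fun p => ⟨⟨(p.1.parts.map (· - 1)).filter (· ≠ 0), ?_, ?_⟩, ?_, ?_⟩,
      fun m => ⟨⟨m.1.parts.map (· + 1) + Multiset.replicate (j - Multiset.card m.1.parts) 1,
        ?_, ?_⟩, ⟨?_, ?_⟩, ?_⟩, ?_, ?_⟩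
    · intro x hx
      have := Multiset.of_mem_filter hx
      omega
    · have hpos : ∀ x ∈ p.1.parts, 0 < x := fun x hx => p.1.parts_pos hx
      have hcard : Multiset.card p.1.parts = j := by
        have h1 := p.2.1.1
        have h2 := p.2.2
        omega
      rw [sum_filter_ne_zero_ms _, sum_map_pred hpos, p.1.parts_sum, hcard]
      omega
    · show Multiset.card ((p.1.parts.map (· - 1)).filter (· ≠ 0)) ≤ j
      have h := Multiset.card_le_card (Multiset.filter_le (· ≠ 0) (p.1.parts.map (· - 1)))
      rw [Multiset.card_map] at h
      have := p.2.1.1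
      omega
    · intro x hx
      obtain ⟨y, hy, rfl⟩ := Multiset.mem_map.mp (Multiset.mem_of_mem_filter hx)
      have := p.2.1.2 y hy
      omega
    · intro x hx
      rcases Multiset.mem_add.mp hx with hx | hx
      · obtain ⟨y, _, rfl⟩ := Multiset.mem_map.mp hx
        omega
      · rw [Multiset.eq_of_mem_replicate hx]
        omega
    · have hcm : Multiset.card m.1.parts ≤ j := m.2.1
      rw [Multiset.sum_add, sum_map_succ, m.1.parts_sum, Multiset.sum_replicate]
      simp only [smul_eq_mul, mul_one]
      omega
    · show Multiset.card (m.1.parts.map (· + 1)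
        + Multiset.replicate (j - Multiset.card m.1.parts) 1) ≤ j
      have hcm : Multiset.card m.1.parts ≤ j := m.2.1
      rw [Multiset.card_add, Multiset.card_map, Multiset.card_replicate]
      omega
    · intro x hx
      rcases Multiset.mem_add.mp hx with hx | hx
      · obtain ⟨y, hy, rfl⟩ := Multiset.mem_map.mp hx
        have := m.2.2 y hy
        omega
      · rw [Multiset.eq_of_mem_replicate hx]
        omega
    · show ¬ Multiset.card (m.1.parts.map (· + 1)
        + Multiset.replicate (j - Multiset.card m.1.parts) 1) ≤ j - 1
      have hcm : Multiset.card m.1.parts ≤ j := m.2.1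
      rw [Multiset.card_add, Multiset.card_map, Multiset.card_replicate]
      omega
    · intro p
      apply Subtype.ext
      apply Nat.Partition.ext
      show (((p.1.parts.map (· - 1)).filter (· ≠ 0)).map (· + 1)
        + Multiset.replicate (j - Multiset.card ((p.1.parts.map (· - 1)).filter (· ≠ 0))) 1)
        = p.1.parts
      have hpos : ∀ x ∈ p.1.parts, 0 < x := fun x hx => p.1.parts_pos hx
      have hcard : Multiset.card p.1.parts = j := by
        have h1 := p.2.1.1
        have h2 := p.2.2
        omega
      have hcf := card_filter_pred hpos
      have hcc : p.1.parts.count 1 ≤ Multiset.card p.1.parts := Multiset.count_le_card 1 _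
      have : j - Multiset.card ((p.1.parts.map (· - 1)).filter (· ≠ 0)) = p.1.parts.count 1 := by
        omega
      rw [this]
      exact ms_restore hpos
    · intro m
      apply Subtype.ext
      apply Nat.Partition.ext
      show (((m.1.parts.map (· + 1) + Multiset.replicate (j - Multiset.card m.1.parts) 1).map
        (· - 1)).filter (· ≠ 0)) = m.1.parts
      rw [Multiset.map_add, Multiset.map_map, Multiset.map_replicate, Multiset.filter_add]
      have h1 : m.1.parts.map ((· - 1) ∘ (· + 1)) = m.1.parts := by
        rw [show ((· - 1) ∘ (· + 1) : ℕ → ℕ) = id from funext fun x => by simp]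
        exact Multiset.map_id _
      rw [h1]
      have h2 : Multiset.filter (· ≠ 0) m.1.parts = m.1.parts :=
        Multiset.filter_eq_self.mpr (fun x hx => by have := m.1.parts_pos hx; omega)
      rw [h2, Multiset.filter_eq_nil.mpr fun a ha => by simp [Multiset.eq_of_mem_replicate ha],
        add_zero]

lemma star (i j s : ℕ) (hi : 1 ≤ i) (hj : 1 ≤ j) :
    Npart i j s + (if i + j ≤ s then Npart (i-1) j (s - (i+j)) else 0)
      = Npart (i-1) j s + (if i ≤ s then Npart i j (s - i) else 0) := by
  by_cases h1 : s < i
  · rw [if_neg (by omega), if_neg (by omega), Npart_small_i (show s ≤ i - 1 by omega) (by omega)]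
  · by_cases h2 : s < i + j
    · rw [if_neg (by omega), if_pos (by omega), add_zero]
      rw [recA i j s hi hj (by omega)]
      rw [show Npart i j (s - i) = Npart i (j-1) (s - i) from
        Npart_small_j (by omega) (by omega)]
    · rw [if_pos (by omega), if_pos (by omega)]
      have hA := recA i j s hi hj (by omega)
      have hB := recB i j (s - i) hi hj (by omega)
      have he : s - i - j = s - (i + j) := by omega
      rw [he] at hB
      omega

section main

variable {k : Type*} [Field k] (q : k)

lemma sum_drop {R B : ℕ} (h : B ≤ R) (c : ℕ → ℕ) (hc : ∀ t, B ≤ t → c t = 0) :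
    ∑ t ∈ Finset.range R, (c t : k) * q ^ t = ∑ t ∈ Finset.range B, (c t : k) * q ^ t := by
  refine (Finset.sum_subset (Finset.range_subset_range.mpr h) ?_).symm
  intro x _ hx
  rw [hc x (by simpa using hx)]
  simp

lemma sum_shift {A R : ℕ} (hA : A ≤ R) (c : ℕ → ℕ) :
    ∑ s ∈ Finset.range R, ((if A ≤ s then c (s - A) else 0 : ℕ) : k) * q ^ s
      = q ^ A * ∑ t ∈ Finset.range (R - A), (c t : k) * q ^ t := by
  rw [Finset.range_eq_Ico, ← Finset.sum_Ico_consecutive _ (Nat.zero_le A) hA]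
  have h1 : ∑ s ∈ Finset.Ico 0 A, ((if A ≤ s then c (s - A) else 0 : ℕ) : k) * q ^ s = 0 := by
    apply Finset.sum_eq_zero
    intro s hs
    rw [if_neg (by simp at hs; omega)]
    simp
  rw [h1, zero_add, Finset.sum_Ico_eq_sum_range, Finset.mul_sum]
  apply Finset.sum_congr rfl
  intro t _
  rw [if_pos (by omega), Nat.add_sub_cancel_left, pow_add]
  ring

end main

/-- If `ζ` is a primitive `n`-th root of unity in a field `k` and `0 < i < n`,
then `Σ_{t≥0} p(i, n−i, t) ζ^{−t} = 0`, i.e. the Gaussian binomial coefficient `C(n,i)_q`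
vanishes at `q = ζ⁻¹`.  (The sum is finite since `p(i, n−i, t) = 0` for `t > i(n−i)`;
`p(i, n−i, t)` is the number of partitions of `t` into at most `n−i` parts each at most `i`.) -/
theorem stmt18 (k : Type*) [Field k] (n : ℕ) (hn : 2 ≤ n) (ζ : k)
    (hζ : IsPrimitiveRoot ζ n) (i : ℕ) (h0 : 0 < i) (hi : i < n) :
    ∑ t ∈ Finset.range (i * (n - i) + 1),
        (Nat.card {p : Nat.Partition t //
            Multiset.card p.parts ≤ n - i ∧ ∀ x ∈ p.parts, x ≤ i} : k) * ζ⁻¹ ^ t = 0 := by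
  set j := n - i with hjdef
  have hj : 1 ≤ j := by omega
  have hij : i + j = n := by omega
  set q : k := ζ⁻¹ with hqdef
  have hq : IsPrimitiveRoot q n := hζ.inv
  have hqn : q ^ n = 1 := hq.pow_eq_one
  have hqi : q ^ i ≠ 1 := hq.pow_ne_one_of_pos_of_lt h0.ne' hi
  show ∑ t ∈ Finset.range (i * j + 1), (Npart i j t : k) * q ^ t = 0
  set R : ℕ := i * j + n + 1 with hRdef
  have key : ∀ s ∈ Finset.range R,
      (Npart i j s : k) * q ^ s
        + ((if i + j ≤ s then Npart (i-1) j (s - (i+j)) else 0 : ℕ) : k) * q ^ s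
      = (Npart (i-1) j s : k) * q ^ s
        + ((if i ≤ s then Npart i j (s - i) else 0 : ℕ) : k) * q ^ s := by
    intro s _
    rw [← add_mul, ← add_mul, ← Nat.cast_add, ← Nat.cast_add, star i j s h0 hj]
  have hsum := Finset.sum_congr rfl key
  rw [Finset.sum_add_distrib, Finset.sum_add_distrib,
    sum_shift q (show i + j ≤ R by omega) (fun t => Npart (i-1) j t),
    sum_shift q (show i ≤ R by omega) (fun t => Npart i j t)] at hsum
  have e1 : R - (i + j) = i * j + 1 := by omega
  have e2 : R - i = i * j + j + 1 := by omega
  rw [e1, e2, hij, hqn, one_mul] at hsum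
  -- normalize all four sums
  have d1 : ∑ s ∈ Finset.range R, (Npart i j s : k) * q ^ s
      = ∑ t ∈ Finset.range (i * j + 1), (Npart i j t : k) * q ^ t :=
    sum_drop q (by omega) _ (fun t ht => Npart_zero (by omega))
  have d2 : ∑ s ∈ Finset.range R, (Npart (i-1) j s : k) * q ^ s
      = ∑ t ∈ Finset.range (i * j + 1), (Npart (i-1) j t : k) * q ^ t := by
    refine sum_drop q (by omega) _ (fun t ht => Npart_zero ?_)
    have : (i - 1) * j ≤ i * j := Nat.mul_le_mul_right j (by omega)
    omega
  have d3 : ∑ t ∈ Finset.range (i * j + j + 1), (Npart i j t : k) * q ^ t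
      = ∑ t ∈ Finset.range (i * j + 1), (Npart i j t : k) * q ^ t :=
    sum_drop q (by omega) _ (fun t ht => Npart_zero (by omega))
  rw [d1, d2, d3] at hsum
  have hfactor : (1 - q ^ i)
      * ∑ t ∈ Finset.range (i * j + 1), (Npart i j t : k) * q ^ t = 0 := by
    linear_combination hsum
  rcases mul_eq_zero.mp hfactor with h | h
  · exact absurd (by linear_combination -h) hqi
  · exact h
end
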